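/- arXiv:1103.3366 — 8 statements merged into one kernel-verified Lean document; each statement's English description precedes it below -/
import Mathlib

section
/- Let g : ℝ → ℝ be continuously differentiable with |g′(x)| ≤ C for all x ∈ ℝ, and let α : ℝ × ℝ → ℝ be twice continuously differentiable (jointly in (y,z)) and satisfy the Doss ODE ∂α/∂z(y,z) = g(α(y,z)) for all (y,z) ∈ ℝ × ℝ, with initial condition α(y,0) = y for all y ∈ ℝ. Then for all (y,z) ∈ ℝ × ℝ, exp(−C|z|) ≤ ∂α/∂y(y,z) ≤ exp(C|z|). -/
/-- If `g` is `C¹` with `|g'| ≤ C`, `α` is `C²` and solves the Doss ODE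
`∂α/∂z (y,z) = g (α (y,z))`, `α (y,0) = y`, then
`exp (-C|z|) ≤ ∂α/∂y (y,z) ≤ exp (C|z|)`. -/
theorem stmt_2 (g : ℝ → ℝ) (hg : ContDiff ℝ 1 g) (C : ℝ)
    (hgC : ∀ x : ℝ, |deriv g x| ≤ C)
    (α : ℝ × ℝ → ℝ) (hα : ContDiff ℝ 2 α)
    (hode : ∀ y z : ℝ, HasDerivAt (fun z' => α (y, z')) (g (α (y, z))) z)
    (hinit : ∀ y : ℝ, α (y, 0) = y) (y z : ℝ) :
    Real.exp (-(C * |z|)) ≤ deriv (fun y' => α (y', z)) y ∧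
      deriv (fun y' => α (y', z)) y ≤ Real.exp (C * |z|) := by
  set A : ℝ × ℝ → (ℝ × ℝ) →L[ℝ] ℝ := fderiv ℝ α with hAdef
  have hα1 : Differentiable ℝ α := hα.differentiable (by norm_num)
  have hA : ContDiff ℝ 1 A := hα.fderiv_right (by norm_num)
  have hAdiff : Differentiable ℝ A := hA.differentiable one_ne_zero
  -- derivative of y' ↦ (y', z) is (1,0), of z' ↦ (y, z') is (0,1)
  have hliney : ∀ (y z : ℝ), HasDerivAt (fun y' : ℝ => ((y', z) : ℝ × ℝ)) (1, 0) y :=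
    fun y z => (hasDerivAt_id y).prodMk (hasDerivAt_const y z)
  have hlinez : ∀ (y z : ℝ), HasDerivAt (fun z' : ℝ => ((y, z') : ℝ × ℝ)) (0, 1) z :=
    fun y z => (hasDerivAt_const z y).prodMk (hasDerivAt_id z)
  -- partial derivatives of α
  have hdy : ∀ (y z : ℝ), HasDerivAt (fun y' => α (y', z)) (A (y, z) (1, 0)) y := fun y z =>
    (hα1 (y, z)).hasFDerivAt.comp_hasDerivAt y (hliney y z)
  have hdz : ∀ (y z : ℝ), HasDerivAt (fun z' => α (y, z')) (A (y, z) (0, 1)) z := fun y z =>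
    (hα1 (y, z)).hasFDerivAt.comp_hasDerivAt z (hlinez y z)
  have hz_eq : ∀ (y z : ℝ), A (y, z) (0, 1) = g (α (y, z)) := fun y z =>
    (hdz y z).unique (hode y z)
  -- u is the partial derivative in y, as a function of z (y fixed)
  set u : ℝ → ℝ := fun s => A (y, s) (1, 0) with hudef
  set c : ℝ → ℝ := fun s => deriv g (α (y, s)) with hcdef
  have hgd : Differentiable ℝ g := hg.differentiable one_ne_zero
  -- derivative of u: via symmetry of second derivative
  have hu' : ∀ s : ℝ, HasDerivAt u (c s * u s) s := by
    intro s
    have hF'' : HasFDerivAt A (fderiv ℝ A (y, s)) (y, s) := (hAdiff (y, s)).hasFDerivAt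
    have hsym : ∀ v w : ℝ × ℝ,
        fderiv ℝ A (y, s) v w = fderiv ℝ A (y, s) w v :=
      second_derivative_symmetric (fun p => (hα1 p).hasFDerivAt) hF''
    -- HasDerivAt (fun s' => A (y,s') (1,0)) (fderiv A (y,s) (0,1) (1,0)) s
    have h1 : HasDerivAt (fun s' => A (y, s')) (fderiv ℝ A (y, s) (0, 1)) s :=
      hF''.comp_hasDerivAt s (hlinez y s)
    have h2 : HasDerivAt u (fderiv ℝ A (y, s) (0, 1) (1, 0)) s := by
      simpa using h1.clm_apply (hasDerivAt_const s ((1 : ℝ), (0 : ℝ)))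
    -- the other mixed partial equals c s * u s
    have h3 : HasDerivAt (fun y' => A (y', s)) (fderiv ℝ A (y, s) (1, 0)) y :=
      hF''.comp_hasDerivAt y (hliney y s)
    have h4 : HasDerivAt (fun y' => A (y', s) (0, 1)) (fderiv ℝ A (y, s) (1, 0) (0, 1)) y := by
      simpa using h3.clm_apply (hasDerivAt_const y ((0 : ℝ), (1 : ℝ)))
    have h5 : HasDerivAt (fun y' => g (α (y', s))) (fderiv ℝ A (y, s) (1, 0) (0, 1)) y := by
      have : (fun y' => A (y', s) (0, 1)) = fun y' => g (α (y', s)) :=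
        funext fun y' => hz_eq y' s
      rwa [this] at h4
    have h6 : HasDerivAt (fun y' => g (α (y', s))) (deriv g (α (y, s)) * u s) y :=
      (hgd (α (y, s))).hasDerivAt.comp y (hdy y s)
    have h7 : fderiv ℝ A (y, s) (1, 0) (0, 1) = c s * u s := h5.unique h6
    have h8 : fderiv ℝ A (y, s) (0, 1) (1, 0) = c s * u s := by
      rw [hsym]; exact h7
    rwa [h8] at h2
  -- c is continuous
  have hc : Continuous c :=
    (hg.continuous_deriv le_rfl).comp (hα.continuous.comp (Continuous.prodMk_right y))
  -- the integral of c
  set h : ℝ → ℝ := fun s => ∫ t in (0 : ℝ)..s, c t with hhdef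
  have hh : ∀ s : ℝ, HasDerivAt h (c s) s := fun s =>
    intervalIntegral.integral_hasDerivAt_right (hc.intervalIntegrable 0 s)
      hc.aestronglyMeasurable.stronglyMeasurableAtFilter hc.continuousAt
  -- v = u * exp(-h) is constant
  set v : ℝ → ℝ := fun s => u s * Real.exp (-(h s)) with hvdef
  have hv' : ∀ s : ℝ, HasDerivAt v 0 s := by
    intro s
    have := (hu' s).mul ((hh s).neg.exp)
    exact this.congr_deriv (by ring)
  have hvconst : ∀ s : ℝ, v s = v 0 :=
    fun s => is_const_of_deriv_eq_zero (fun t => (hv' t).differentiableAt)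
      (fun t => (hv' t).deriv) s 0
  -- u 0 = 1
  have hu0 : u 0 = 1 := by
    have h1 : (fun y' => α (y', 0)) = fun y' : ℝ => y' := funext hinit
    have h2 := hdy y 0
    rw [h1] at h2
    exact h2.unique (hasDerivAt_id y)
  have hh0 : h 0 = 0 := by simp [hhdef]
  -- u s = exp (h s)
  have huexp : ∀ s : ℝ, u s = Real.exp (h s) := by
    intro s
    have h1 : u s * Real.exp (-(h s)) = 1 := by
      have := hvconst s
      simpa [hvdef, hu0, hh0] using this
    have h2 : u s * Real.exp (-(h s)) * Real.exp (h s) = Real.exp (h s) := by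
      rw [h1, one_mul]
    rwa [mul_assoc, ← Real.exp_add, neg_add_cancel, Real.exp_zero, mul_one] at h2
  -- |h z| ≤ C * |z|
  have hbound : |h z| ≤ C * |z| := by
    have := intervalIntegral.norm_integral_le_of_norm_le_const
      (a := (0 : ℝ)) (b := z) (C := C) (f := c) (fun t _ => hgC (α (y, t)))
    simpa [Real.norm_eq_abs] using this
  have hderiv_eq : deriv (fun y' => α (y', z)) y = u z := (hdy y z).deriv
  rw [hderiv_eq, huexp z]
  obtain ⟨hl, hr⟩ := abs_le.mp hbound
  exact ⟨Real.exp_le_exp.mpr hl, Real.exp_le_exp.mpr hr⟩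
end

section
/- Let g : ℝ → ℝ be twice continuously differentiable with bounded first and second derivatives, and let α : ℝ × ℝ → ℝ be three times continuously differentiable (jointly in (y,z)) and satisfy the Doss ODE ∂α/∂z(y,z) = g(α(y,z)) for all (y,z) ∈ ℝ × ℝ, with initial condition α(y,0) = y for all y ∈ ℝ. Then there exists a constant C > 0, depending only on sup|g′| and sup|g″|, such that |∂²α/∂y²(y,z)| ≤ exp(C|z|) for all (y,z) ∈ ℝ × ℝ. -/
open Real Set

lemma hasDerivAt_snd_comp {f : ℝ × ℝ → ℝ} (hf : Differentiable ℝ f) (y z : ℝ) :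
    HasDerivAt (fun t => f (y, t)) (fderiv ℝ f (y, z) (0, 1)) z := by
  have h := (hf (y, z)).hasFDerivAt.comp_hasDerivAt z
    ((hasDerivAt_const z y).prodMk (hasDerivAt_id z))
  exact h

lemma hasDerivAt_fst_comp {f : ℝ × ℝ → ℝ} (hf : Differentiable ℝ f) (y z : ℝ) :
    HasDerivAt (fun t => f (t, z)) (fderiv ℝ f (y, z) (1, 0)) y := by
  have h := (hf (y, z)).hasFDerivAt.comp_hasDerivAt y
    ((hasDerivAt_id y).prodMk (hasDerivAt_const y z))
  simp at h; exact h

lemma fderiv_apply_const {F : ℝ × ℝ → (ℝ × ℝ →L[ℝ] ℝ)} {x : ℝ × ℝ}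
    (hF : DifferentiableAt ℝ F x) (w d : ℝ × ℝ) :
    fderiv ℝ (fun x' => F x' w) x d = fderiv ℝ F x d w := by
  have h := ((ContinuousLinearMap.apply ℝ ℝ w).hasFDerivAt.comp x hF.hasFDerivAt).fderiv
  rw [show (fun x' => F x' w) = (ContinuousLinearMap.apply ℝ ℝ w) ∘ F from rfl, h]
  rfl

lemma fderiv_comp_dir {h : ℝ → ℝ} {α : ℝ × ℝ → ℝ} {x : ℝ × ℝ}
    (hh : DifferentiableAt ℝ h (α x)) (hαx : DifferentiableAt ℝ α x) (d : ℝ × ℝ) :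
    fderiv ℝ (fun x' => h (α x')) x d = deriv h (α x) * fderiv ℝ α x d := by
  rw [show (fun x' => h (α x')) = h ∘ α from rfl, fderiv_comp x hh hαx,
    ContinuousLinearMap.comp_apply]
  have : fderiv ℝ h (α x) (fderiv ℝ α x d) = (fderiv ℝ α x d) • (fderiv ℝ h (α x) 1) := by
    rw [← map_smul, smul_eq_mul, mul_one]
  rw [this, fderiv_apply_one_eq_deriv, smul_eq_mul, mul_comm]

lemma exp_sub_one_le {x : ℝ} (_hx : 0 ≤ x) : exp x - 1 ≤ x * exp x := by
  have h1 := Real.add_one_le_exp (-x)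
  rw [Real.exp_neg] at h1
  have h2 := Real.exp_pos x
  have h3 : (1 - x) * exp x ≤ (exp x)⁻¹ * exp x :=
    mul_le_mul_of_nonneg_right (by linarith) h2.le
  rw [inv_mul_cancel₀ h2.ne'] at h3
  nlinarith

lemma key (C₁ C₂ : ℝ) (hC₁ : 0 ≤ C₁) (hC₂ : 0 ≤ C₂)
    (g : ℝ → ℝ) (hg : ContDiff ℝ 2 g)
    (hg1 : ∀ x : ℝ, |deriv g x| ≤ C₁) (hg2 : ∀ x : ℝ, |iteratedDeriv 2 g x| ≤ C₂)
    (α : ℝ × ℝ → ℝ) (hα : ContDiff ℝ 3 α)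
    (hode : ∀ y z : ℝ, HasDerivAt (fun z' => α (y, z')) (g (α (y, z))) z)
    (hinit : ∀ y : ℝ, α (y, 0) = y) (y z : ℝ) (hz : 0 ≤ z) :
    |iteratedDeriv 2 (fun y' => α (y', z)) y| ≤ exp ((3 * C₁ + C₂ + 1) * z) := by
  have hαd : Differentiable ℝ α := hα.differentiable (by norm_num)
  have hg' : Differentiable ℝ g := hg.differentiable (by norm_num)
  have hdg : ContDiff ℝ 1 (deriv g) := by
    have h2 : (2 : WithTop ℕ∞) = 1 + 1 := by norm_num
    rw [h2] at hg
    exact (contDiff_succ_iff_deriv.mp hg).2.2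
  have hF : ContDiff ℝ 2 (fderiv ℝ α) := hα.fderiv_right (by norm_num)
  -- the ODE in fderiv form
  have hA : ∀ x : ℝ × ℝ, fderiv ℝ α x (0, 1) = g (α x) := by
    intro x
    have h1 := hasDerivAt_snd_comp hαd x.1 x.2
    have h2 := hode x.1 x.2
    rw [Prod.mk.eta] at h1
    exact h1.unique (by simpa using h2)
  -- u = ∂α/∂y
  set u : ℝ × ℝ → ℝ := fun x => fderiv ℝ α x (1, 0) with hu_def
  have hu : ContDiff ℝ 2 u :=
    (ContinuousLinearMap.apply ℝ ℝ ((1:ℝ), (0:ℝ))).contDiff.comp hF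
  have hud : Differentiable ℝ u := hu.differentiable (by norm_num)
  -- ∂u/∂z = g'(α) * u
  have hB : ∀ x : ℝ × ℝ, fderiv ℝ u x (0, 1) = deriv g (α x) * u x := by
    intro x
    have e1 : fderiv ℝ u x (0, 1) = fderiv ℝ (fderiv ℝ α) x (0, 1) (1, 0) :=
      fderiv_apply_const (hF.differentiable (by norm_num) x) _ _
    have e2 : fderiv ℝ (fderiv ℝ α) x (0, 1) (1, 0)
        = fderiv ℝ (fderiv ℝ α) x (1, 0) (0, 1) :=
      (hα.contDiffAt.isSymmSndFDerivAt (by norm_num)) _ _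
    have e3 : fderiv ℝ (fun x' => fderiv ℝ α x' (0, 1)) x (1, 0)
        = fderiv ℝ (fderiv ℝ α) x (1, 0) (0, 1) :=
      fderiv_apply_const (hF.differentiable (by norm_num) x) _ _
    have e4 : (fun x' => fderiv ℝ α x' ((0:ℝ), (1:ℝ))) = fun x' => g (α x') :=
      funext fun x' => hA x'
    have e5 : fderiv ℝ (fun x' => g (α x')) x (1, 0) = deriv g (α x) * u x :=
      fderiv_comp_dir (hg' (α x)) (hαd x) _
    rw [e1, e2, ← e3, e4, e5]
  -- v = ∂²α/∂y²
  set v : ℝ × ℝ → ℝ := fun x => fderiv ℝ u x (1, 0) with hv_def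
  have hFu : ContDiff ℝ 1 (fderiv ℝ u) := hu.fderiv_right (by norm_num)
  have hv : ContDiff ℝ 1 v :=
    (ContinuousLinearMap.apply ℝ ℝ ((1:ℝ), (0:ℝ))).contDiff.comp hFu
  have hvd : Differentiable ℝ v := hv.differentiable (by norm_num)
  -- ∂v/∂z = g''(α) u² + g'(α) v
  have hC : ∀ x : ℝ × ℝ, fderiv ℝ v x (0, 1)
      = deriv (deriv g) (α x) * u x * u x + deriv g (α x) * v x := by
    intro x
    have e1 : fderiv ℝ v x (0, 1) = fderiv ℝ (fderiv ℝ u) x (0, 1) (1, 0) :=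
      fderiv_apply_const (hFu.differentiable (by norm_num) x) _ _
    have e2 : fderiv ℝ (fderiv ℝ u) x (0, 1) (1, 0)
        = fderiv ℝ (fderiv ℝ u) x (1, 0) (0, 1) :=
      (hu.contDiffAt.isSymmSndFDerivAt (by simp)) _ _
    have e3 : fderiv ℝ (fun x' => fderiv ℝ u x' (0, 1)) x (1, 0)
        = fderiv ℝ (fderiv ℝ u) x (1, 0) (0, 1) :=
      fderiv_apply_const (hFu.differentiable (by norm_num) x) _ _
    have e4 : (fun x' => fderiv ℝ u x' ((0:ℝ), (1:ℝ)))
        = fun x' => deriv g (α x') * u x' := funext fun x' => hB x'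
    have hdga : DifferentiableAt ℝ (fun x' => deriv g (α x')) x :=
      ((hdg.differentiable (by norm_num)) (α x)).comp x (hαd x)
    have e5 : fderiv ℝ (fun x' => deriv g (α x') * u x') x (1, 0)
        = deriv (deriv g) (α x) * u x * u x + deriv g (α x) * v x := by
      rw [fderiv_fun_mul hdga (hud x)]
      simp only [ContinuousLinearMap.add_apply, ContinuousLinearMap.coe_smul',
        Pi.smul_apply, smul_eq_mul]
      rw [fderiv_comp_dir ((hdg.differentiable (by norm_num)) (α x)) (hαd x)]
      ring
    rw [e1, e2, ← e3, e4, e5]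
  -- initial conditions
  have hu0 : ∀ y' : ℝ, u (y', 0) = 1 := by
    intro y'
    have h1 := hasDerivAt_fst_comp hαd y' 0
    have h2 : HasDerivAt (fun t : ℝ => α (t, 0)) 1 y' := by
      have : (fun t : ℝ => α (t, 0)) = fun t => t := funext fun t => hinit t
      rw [this]; exact hasDerivAt_id y'
    exact h1.unique h2
  have hv0 : v (y, 0) = 0 := by
    have h1 := hasDerivAt_fst_comp hud y 0
    have h2 : HasDerivAt (fun t : ℝ => u (t, 0)) 0 y := by
      have : (fun t : ℝ => u (t, 0)) = fun _ => (1:ℝ) := funext fun t => hu0 t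
      rw [this]; exact hasDerivAt_const y 1
    exact h1.unique h2
  -- iteratedDeriv 2 in terms of v
  have hiter : iteratedDeriv 2 (fun y' => α (y', z)) y = v (y, z) := by
    rw [iteratedDeriv_succ, iteratedDeriv_one]
    have hd1 : deriv (fun y' => α (y', z)) = fun y' => u (y', z) :=
      funext fun y' => (hasDerivAt_fst_comp hαd y' z).deriv
    rw [hd1]
    exact (hasDerivAt_fst_comp hud y z).deriv
  rw [hiter]
  -- Gronwall for U
  have hUd : ∀ s : ℝ, HasDerivAt (fun s' => u (y, s'))
      (deriv g (α (y, s)) * u (y, s)) s := by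
    intro s
    have h := hasDerivAt_snd_comp hud y s
    rwa [hB (y, s)] at h
  have hU : ∀ s ∈ Icc (0:ℝ) z, |u (y, s)| ≤ exp (C₁ * s) := by
    intro s hs
    have h := norm_le_gronwallBound_of_norm_deriv_right_le
      (f := fun s' => u (y, s')) (f' := fun s' => deriv g (α (y, s')) * u (y, s'))
      (δ := 1) (K := C₁) (ε := 0) (a := 0) (b := z)
      (fun s' _ => ((hUd s').continuousAt).continuousWithinAt)
      (fun s' _ => (hUd s').hasDerivWithinAt)
      (by simp [Real.norm_eq_abs, hu0])
      (fun s' _ => by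
        rw [Real.norm_eq_abs, Real.norm_eq_abs, abs_mul]
        have := mul_le_mul_of_nonneg_right (hg1 (α (y, s'))) (abs_nonneg (u (y, s')))
        linarith) s hs
    rwa [Real.norm_eq_abs, sub_zero, gronwallBound_ε0, one_mul] at h
  -- Gronwall for V
  have hg2' : ∀ x : ℝ, |deriv (deriv g) x| ≤ C₂ := by
    intro x
    have := hg2 x
    rwa [iteratedDeriv_succ, iteratedDeriv_one] at this
  have hVd : ∀ s : ℝ, HasDerivAt (fun s' => v (y, s'))
      (deriv (deriv g) (α (y, s)) * u (y, s) * u (y, s) + deriv g (α (y, s)) * v (y, s)) s := by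
    intro s
    have h := hasDerivAt_snd_comp hvd y s
    rwa [hC (y, s)] at h
  set ε : ℝ := C₂ * exp (2 * C₁ * z) with hε_def
  have hbound : ∀ s ∈ Ico (0:ℝ) z,
      ‖deriv (deriv g) (α (y, s)) * u (y, s) * u (y, s) + deriv g (α (y, s)) * v (y, s)‖
        ≤ (C₁ + 1) * ‖v (y, s)‖ + ε := by
    intro s hs
    rw [Real.norm_eq_abs, Real.norm_eq_abs]
    have hUs : |u (y, s)| ≤ exp (C₁ * s) := hU s ⟨hs.1, hs.2.le⟩
    have h1 : |deriv (deriv g) (α (y, s)) * u (y, s) * u (y, s)| ≤ ε := by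
      rw [abs_mul, abs_mul]
      have hb : exp (C₁ * s) ≤ exp (C₁ * z) :=
        exp_le_exp.mpr (mul_le_mul_of_nonneg_left hs.2.le hC₁)
      have h2 : |u (y, s)| * |u (y, s)| ≤ exp (2 * C₁ * z) := by
        have := mul_le_mul hUs hUs (abs_nonneg _) (exp_pos _).le
        calc |u (y, s)| * |u (y, s)| ≤ exp (C₁ * s) * exp (C₁ * s) := this
          _ ≤ exp (C₁ * z) * exp (C₁ * z) :=
            mul_le_mul hb hb (exp_pos _).le (exp_pos _).le
          _ = exp (2 * C₁ * z) := by rw [← exp_add]; ring_nf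
      calc |deriv (deriv g) (α (y, s))| * |u (y, s)| * |u (y, s)|
          ≤ C₂ * (|u (y, s)| * |u (y, s)|) := by
            rw [mul_assoc]
            exact mul_le_mul_of_nonneg_right (hg2' _) (by positivity)
        _ ≤ C₂ * exp (2 * C₁ * z) := mul_le_mul_of_nonneg_left h2 hC₂
    have h3 : |deriv g (α (y, s)) * v (y, s)| ≤ (C₁ + 1) * |v (y, s)| := by
      rw [abs_mul]
      have := mul_le_mul_of_nonneg_right (hg1 (α (y, s))) (abs_nonneg (v (y, s)))
      nlinarith [abs_nonneg (v (y, s))]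
    calc |deriv (deriv g) (α (y, s)) * u (y, s) * u (y, s) + deriv g (α (y, s)) * v (y, s)|
        ≤ |deriv (deriv g) (α (y, s)) * u (y, s) * u (y, s)|
          + |deriv g (α (y, s)) * v (y, s)| := abs_add_le _ _
      _ ≤ (C₁ + 1) * |v (y, s)| + ε := by linarith
  have hV : |v (y, z)| ≤ gronwallBound 0 (C₁ + 1) ε (z - 0) :=
    norm_le_gronwallBound_of_norm_deriv_right_le
      (f := fun s' => v (y, s'))
      (f' := fun s' => deriv (deriv g) (α (y, s')) * u (y, s') * u (y, s')
        + deriv g (α (y, s')) * v (y, s'))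
      (fun s' _ => ((hVd s').continuousAt).continuousWithinAt)
      (fun s' _ => (hVd s').hasDerivWithinAt)
      (by simp [Real.norm_eq_abs, hv0])
      hbound z ⟨le_refl 0 |>.trans hz, le_refl z⟩
  -- final estimation
  have hK : (0:ℝ) < C₁ + 1 := by linarith
  rw [sub_zero, gronwallBound_of_K_ne_0 hK.ne'] at hV
  simp only [zero_mul, zero_add] at hV
  have hεnn : 0 ≤ ε := mul_nonneg hC₂ (exp_pos _).le
  have step1 : ε / (C₁ + 1) * (exp ((C₁ + 1) * z) - 1) ≤ ε * z * exp ((C₁ + 1) * z) := by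
    have h1 : exp ((C₁ + 1) * z) - 1 ≤ ((C₁ + 1) * z) * exp ((C₁ + 1) * z) := by
      have hx : 0 ≤ (C₁ + 1) * z := mul_nonneg hK.le hz
      have h1 := Real.add_one_le_exp (-((C₁ + 1) * z))
      rw [Real.exp_neg] at h1
      have h2 := Real.exp_pos ((C₁ + 1) * z)
      have h3 : (1 - (C₁ + 1) * z) * exp ((C₁ + 1) * z)
          ≤ (exp ((C₁ + 1) * z))⁻¹ * exp ((C₁ + 1) * z) :=
        mul_le_mul_of_nonneg_right (by linarith) h2.le
      rw [inv_mul_cancel₀ h2.ne'] at h3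
      nlinarith
    calc ε / (C₁ + 1) * (exp ((C₁ + 1) * z) - 1)
        ≤ ε / (C₁ + 1) * (((C₁ + 1) * z) * exp ((C₁ + 1) * z)) :=
          mul_le_mul_of_nonneg_left h1 (by positivity)
      _ = ε * z * exp ((C₁ + 1) * z) := by field_simp
  have step2 : ε * z * exp ((C₁ + 1) * z) ≤ exp ((3 * C₁ + C₂ + 1) * z) := by
    have hc2z : C₂ * z ≤ exp (C₂ * z) := by
      have := Real.add_one_le_exp (C₂ * z); linarith
    calc ε * z * exp ((C₁ + 1) * z)
        = (C₂ * z) * (exp (2 * C₁ * z) * exp ((C₁ + 1) * z)) := by rw [hε_def]; ring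
      _ ≤ exp (C₂ * z) * (exp (2 * C₁ * z) * exp ((C₁ + 1) * z)) :=
          mul_le_mul_of_nonneg_right hc2z (by positivity)
      _ = exp ((3 * C₁ + C₂ + 1) * z) := by rw [← exp_add, ← exp_add]; ring_nf
  calc |v (y, z)| ≤ ε / (C₁ + 1) * (exp ((C₁ + 1) * z) - 1) := hV
    _ ≤ exp ((3 * C₁ + C₂ + 1) * z) := le_trans step1 step2

/-- If `g` is `C²` with `|g'| ≤ C₁`, `|g''| ≤ C₂` and `α` is `C³`
and solves the Doss ODE `∂α/∂z (y,z) = g (α (y,z))`, `α (y,0) = y`, then there is a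
constant `C > 0`, depending only on the bounds `C₁, C₂`, such that
`|∂²α/∂y² (y,z)| ≤ exp (C|z|)`. -/
theorem stmt_4 (C₁ C₂ : ℝ) :
    ∃ C > 0, ∀ g : ℝ → ℝ, ContDiff ℝ 2 g →
      (∀ x : ℝ, |deriv g x| ≤ C₁) → (∀ x : ℝ, |iteratedDeriv 2 g x| ≤ C₂) →
      ∀ α : ℝ × ℝ → ℝ, ContDiff ℝ 3 α →
      (∀ y z : ℝ, HasDerivAt (fun z' => α (y, z')) (g (α (y, z))) z) →
      (∀ y : ℝ, α (y, 0) = y) →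
      ∀ y z : ℝ, |iteratedDeriv 2 (fun y' => α (y', z)) y| ≤ Real.exp (C * |z|) := by
  refine ⟨3 * |C₁| + |C₂| + 1, by positivity, ?_⟩
  intro g hg hg1 hg2 α hα hode hinit y z
  have hC₁ : 0 ≤ C₁ := le_trans (abs_nonneg _) (hg1 0)
  have hC₂ : 0 ≤ C₂ := le_trans (abs_nonneg _) (hg2 0)
  have hCeq : 3 * |C₁| + |C₂| + 1 = 3 * C₁ + C₂ + 1 := by
    rw [abs_of_nonneg hC₁, abs_of_nonneg hC₂]
  rw [hCeq]
  rcases le_or_gt 0 z with hz | hz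
  · rw [abs_of_nonneg hz]
    exact key C₁ C₂ hC₁ hC₂ g hg hg1 hg2 α hα hode hinit y z hz
  · -- reflect in `z`
    set g' : ℝ → ℝ := fun x => -g x with hg'_def
    set β : ℝ × ℝ → ℝ := fun p => α (p.1, -p.2) with hβ_def
    have hgc : ContDiff ℝ 2 g' := hg.neg
    have hg1' : ∀ x : ℝ, |deriv g' x| ≤ C₁ := by
      intro x
      have : deriv g' x = -deriv g x := deriv.neg
      rw [this, abs_neg]; exact hg1 x
    have hg2' : ∀ x : ℝ, |iteratedDeriv 2 g' x| ≤ C₂ := by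
      intro x
      have : iteratedDeriv 2 g' x = -iteratedDeriv 2 g x := by
        have := iteratedDeriv_neg 2 g x
        simpa [hg'_def] using this
      rw [this, abs_neg]; exact hg2 x
    have hβc : ContDiff ℝ 3 β := hα.comp (contDiff_fst.prodMk contDiff_snd.neg)
    have hβode : ∀ y' s : ℝ, HasDerivAt (fun s' => β (y', s')) (g' (β (y', s))) s := by
      intro y' s
      have h := (hode y' (-s)).comp s (hasDerivAt_neg s)
      have : HasDerivAt (fun s' : ℝ => α (y', -s')) (g (α (y', -s)) * -1) s := h
      simpa [hβ_def, hg'_def, mul_comm] using this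
    have hβinit : ∀ y' : ℝ, β (y', 0) = y' := by
      intro y'; simp [hβ_def, hinit]
    have h := key C₁ C₂ hC₁ hC₂ g' hgc hg1' hg2' β hβc hβode hβinit y (-z)
      (by linarith)
    have hfun : (fun y' => β (y', -z)) = fun y' => α (y', z) := by
      funext y'; simp [hβ_def]
    rw [hfun] at h
    rwa [abs_of_neg hz]
end

section
/- Let g : ℝ → ℝ be continuously differentiable with |g(x)| ≤ M and |g′(x)| ≤ C for all x ∈ ℝ, and let α : ℝ × ℝ → ℝ be twice continuously differentiable (jointly in (y,z)) and satisfy the Doss ODE ∂α/∂z(y,z) = g(α(y,z)) for all (y,z) ∈ ℝ × ℝ, with initial condition α(y,0) = y for all y ∈ ℝ. Suppose h : ℝ × ℝ → ℝ is differentiable and satisfies α(h(y,z),z) = y for all (y,z) ∈ ℝ × ℝ. Then for all (y,z) ∈ ℝ × ℝ: (i) |h(y,z)| ≤ |y| + M·|z|, and (ii) exp(−C|z|) ≤ ∂h/∂y(y,z) ≤ exp(C|z|). -/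
/-- If `g` is `C¹` with `|g| ≤ M` and `|g'| ≤ C`, `α` is `C²` and
solves the Doss ODE `∂α/∂z (y,z) = g (α (y,z))`, `α (y,0) = y`, and `h` is a
differentiable `y`-inverse of `α`, i.e. `α (h (y,z), z) = y`, then
`|h (y,z)| ≤ |y| + M|z|` and `exp (-C|z|) ≤ ∂h/∂y (y,z) ≤ exp (C|z|)`. -/
theorem stmt_9 (g : ℝ → ℝ) (hg : ContDiff ℝ 1 g) (M C : ℝ)
    (hgM : ∀ x : ℝ, |g x| ≤ M) (hgC : ∀ x : ℝ, |deriv g x| ≤ C)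
    (α : ℝ × ℝ → ℝ) (hα : ContDiff ℝ 2 α)
    (hode : ∀ y z : ℝ, HasDerivAt (fun z' => α (y, z')) (g (α (y, z))) z)
    (hinit : ∀ y : ℝ, α (y, 0) = y)
    (h : ℝ × ℝ → ℝ) (hh : Differentiable ℝ h)
    (hinv : ∀ y z : ℝ, α (h (y, z), z) = y) (y z : ℝ) :
    |h (y, z)| ≤ |y| + M * |z| ∧
      Real.exp (-(C * |z|)) ≤ deriv (fun y' => h (y', z)) y ∧
      deriv (fun y' => h (y', z)) y ≤ Real.exp (C * |z|) := by
  have hαd : Differentiable ℝ α := hα.differentiable (by norm_num)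
  set w := h (y, z) with hw
  -- Part (i)
  have part1 : |h (y, z)| ≤ |y| + M * |z| := by
    have hlip : ‖α (w, z) - α (w, 0)‖ ≤ M * ‖z - (0:ℝ)‖ := by
      apply Convex.norm_image_sub_le_of_norm_hasDerivWithin_le
        (f := fun z' => α (w, z')) (f' := fun z' => g (α (w, z')))
        (fun x _ => (hode w x).hasDerivWithinAt)
        (fun x _ => by simpa using hgM (α (w, x))) convex_univ trivial trivial
    rw [hinv, hinit] at hlip
    simp only [Real.norm_eq_abs, sub_zero] at hlip
    have h1 : |w| - |y| ≤ |w - y| := abs_sub_abs_le_abs_sub w y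
    rw [abs_sub_comm] at h1
    linarith
  refine ⟨part1, ?_⟩
  -- Part (ii)
  set D := fderiv ℝ α with hD
  have hDf : ∀ p, HasFDerivAt α (D p) p := fun p => (hαd p).hasFDerivAt
  have hDc : ContDiff ℝ 1 D := hα.fderiv_right (by norm_num)
  have hDd : Differentiable ℝ D := hDc.differentiable one_ne_zero
  set D2 := fderiv ℝ D with hD2
  -- the z-partial of α is g ∘ α
  have hz : ∀ p : ℝ × ℝ, D p (0, 1) = g (α p) := by
    intro p
    have h1 : HasDerivAt (fun z' => (p.1, z')) ((0 : ℝ), (1 : ℝ)) p.2 :=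
      (hasDerivAt_const p.2 p.1).prodMk (hasDerivAt_id p.2)
    have h2 : HasDerivAt (fun z' => α (p.1, z')) (D p (0, 1)) p.2 := by
      exact (hDf p).comp_hasDerivAt p.2 h1
    have := h2.unique (hode p.1 p.2)
    simpa using this
  -- the y-partial u of α along (w, ·) solves u' = g'(α) u
  set u : ℝ → ℝ := fun t => D (w, t) ((1 : ℝ), (0 : ℝ)) with hu
  have hu0 : u 0 = 1 := by
    have h1 : HasDerivAt (fun y' => ((y' : ℝ), (0 : ℝ))) ((1 : ℝ), (0 : ℝ)) w :=
      (hasDerivAt_id w).prodMk (hasDerivAt_const w 0)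
    have h2 : HasDerivAt (fun y' => α (y', 0)) (D (w, 0) (1, 0)) w := by
      exact (hDf (w, 0)).comp_hasDerivAt w h1
    have h3 : HasDerivAt (fun y' : ℝ => y') (D (w, 0) (1, 0)) w := by
      simpa only [hinit] using h2
    exact h3.unique (hasDerivAt_id w)
  have hode2 : ∀ t : ℝ, HasDerivAt u (deriv g (α (w, t)) * u t) t := by
    intro t
    have h1 : HasDerivAt (fun t' => ((w : ℝ), t')) ((0 : ℝ), (1 : ℝ)) t :=
      (hasDerivAt_const t w).prodMk (hasDerivAt_id t)
    have h2 : HasDerivAt (fun t' => D (w, t')) (D2 (w, t) (0, 1)) t := by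
      exact (hDd (w, t)).hasFDerivAt.comp_hasDerivAt t h1
    have h3 : HasDerivAt u (D2 (w, t) (0, 1) (1, 0)) t := by
      exact
        ((ContinuousLinearMap.apply ℝ ℝ ((1 : ℝ), (0 : ℝ))).hasFDerivAt.comp_hasDerivAt t h2)
    have hsym : D2 (w, t) (0, 1) (1, 0) = D2 (w, t) (1, 0) (0, 1) :=
      second_derivative_symmetric hDf ((hDd (w, t)).hasFDerivAt) _ _
    -- compute D2 p (1,0) (0,1) = g'(α p) * D p (1,0)
    have hkey : D2 (w, t) (1, 0) (0, 1) = deriv g (α (w, t)) * u t := by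
      have hA : HasFDerivAt (fun q => D q ((0 : ℝ), (1 : ℝ)))
          ((ContinuousLinearMap.apply ℝ ℝ ((0 : ℝ), (1 : ℝ))).comp (D2 (w, t))) (w, t) :=
        (ContinuousLinearMap.apply ℝ ℝ ((0 : ℝ), (1 : ℝ))).hasFDerivAt.comp (w, t)
          (hDd (w, t)).hasFDerivAt
      have hB : HasFDerivAt (fun q => g (α q))
          (deriv g (α (w, t)) • D (w, t)) (w, t) :=
        HasDerivAt.comp_hasFDerivAt (w, t)
          ((hg.differentiable one_ne_zero (α (w, t))).hasDerivAt) (hDf (w, t))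
      have heq : (fun q => D q ((0 : ℝ), (1 : ℝ))) = fun q => g (α q) := funext hz
      rw [heq] at hA
      have := hA.unique hB
      calc D2 (w, t) (1, 0) (0, 1)
          = ((ContinuousLinearMap.apply ℝ ℝ ((0 : ℝ), (1 : ℝ))).comp (D2 (w, t))) (1, 0) := rfl
        _ = (deriv g (α (w, t)) • D (w, t)) (1, 0) := by rw [this]
        _ = deriv g (α (w, t)) * u t := rfl
    rw [hsym, hkey] at h3
    exact h3
  -- solve the linear ODE explicitly
  set c : ℝ → ℝ := fun t => deriv g (α (w, t)) with hc
  have hcc : Continuous c := by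
    have : Continuous (deriv g) := hg.continuous_deriv le_rfl
    exact this.comp (hα.continuous.comp (by continuity))
  set F : ℝ → ℝ := fun t => ∫ s in (0 : ℝ)..t, c s with hF
  have hFd : ∀ t, HasDerivAt F (c t) t := fun t =>
    intervalIntegral.integral_hasDerivAt_right (hcc.intervalIntegrable _ _)
      (hcc.stronglyMeasurableAtFilter _ _) hcc.continuousAt
  have hconst : ∀ t, u t * Real.exp (-F t) = 1 := by
    have hd : Differentiable ℝ (fun t => u t * Real.exp (-F t)) := by
      intro t
      exact ((hode2 t).differentiableAt).mul (((hFd t).differentiableAt.neg).exp)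
    have hzero : ∀ t, deriv (fun t => u t * Real.exp (-F t)) t = 0 := by
      intro t
      have h1 : HasDerivAt (fun t => u t * Real.exp (-F t))
          (c t * u t * Real.exp (-F t) + u t * (Real.exp (-F t) * -c t)) t :=
        (hode2 t).mul (((hFd t).neg).exp)
      rw [h1.deriv]; ring
    intro t
    have := is_const_of_deriv_eq_zero hd hzero t 0
    rw [this]
    simp [hu0, hF]
  have huv : ∀ t, u t = Real.exp (F t) := by
    intro t
    have h1 := hconst t
    have h2 : Real.exp (-F t) ≠ 0 := Real.exp_ne_zero _
    rw [Real.exp_neg, mul_inv_eq_one₀ (Real.exp_ne_zero _)] at h1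
    linarith [h1]
  have hFb : |F z| ≤ C * |z| := by
    have : ‖∫ s in (0:ℝ)..z, c s‖ ≤ C * |z - 0| :=
      intervalIntegral.norm_integral_le_of_norm_le_const fun x _ => by
        simpa using hgC (α (w, x))
    simpa using this
  -- derivative of h in y
  have hhd : HasDerivAt (fun y' => h (y', z)) (deriv (fun y' => h (y', z)) y) y := by
    have : Differentiable ℝ (fun y' => h (y', z)) :=
      hh.comp (differentiable_id.prodMk (differentiable_const _))
    exact (this y).hasDerivAt
  set d := deriv (fun y' => h (y', z)) y with hd
  have hchain : HasDerivAt (fun y' => α (h (y', z), z)) (d * u z) y := by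
    have h1 : HasDerivAt (fun y' => ((h (y', z) : ℝ), (z : ℝ))) (d, (0 : ℝ)) y :=
      hhd.prodMk (hasDerivAt_const y z)
    have h2 := (hDf (w, z)).comp_hasDerivAt y (by exact h1)
    have h3 : (D (w, z)) (d, (0:ℝ)) = d * u z := by
      have : ((d : ℝ), (0 : ℝ)) = d • ((1 : ℝ), (0 : ℝ)) := by simp
      rw [this, map_smul]; rfl
    simpa [h3, Function.comp_def] using h2
  have hid : (fun y' => α (h (y', z), z)) = fun y' => y' := funext fun y' => hinv y' z
  rw [hid] at hchain
  have hmul : d * u z = 1 := hchain.unique (hasDerivAt_id y)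
  have huz : u z = Real.exp (F z) := huv z
  have hdval : d = Real.exp (-F z) := by
    rw [huz] at hmul
    rw [Real.exp_neg]
    field_simp at hmul ⊢
    linarith
  have hFb1 : -(C * |z|) ≤ -F z := by
    have := abs_le.mp hFb; linarith [this.2]
  have hFb2 : -F z ≤ C * |z| := by
    have := abs_le.mp hFb; linarith [this.1]
  rw [hd] at *
  constructor
  · rw [hdval]; exact Real.exp_le_exp.mpr hFb1
  · rw [hdval]; exact Real.exp_le_exp.mpr hFb2
end

section
/- Let g : ℝ → ℝ be twice continuously differentiable with |g′(x)| ≤ C and |g″(x)| ≤ C′ for all x ∈ ℝ, and let α : ℝ × ℝ → ℝ be three times continuously differentiable (jointly in (y,z)) and satisfy the Doss ODE ∂α/∂z(y,z) = g(α(y,z)) for all (y,z) ∈ ℝ × ℝ, with initial condition α(y,0) = y for all y ∈ ℝ. Suppose h : ℝ × ℝ → ℝ is twice continuously differentiable and satisfies α(h(y,z),z) = y for all (y,z) ∈ ℝ × ℝ. Then for all (y,z) ∈ ℝ × ℝ, ∂²h/∂y²(y,z) = − ∂²α/∂y²(h(y,z),z) / (∂α/∂y(h(y,z),z))³; in particular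 there exists a constant C₀ > 0, depending only on C and C′, such that |∂²h/∂y²(y,z)| ≤ exp(C₀|z|). -/
lemma aux_pd1 (f : ℝ × ℝ → ℝ) (p : ℝ × ℝ) (hf : DifferentiableAt ℝ f p) :
    HasDerivAt (fun y' => f (y', p.2)) (fderiv ℝ f p (1, 0)) p.1 := by
  have h1 := hasFDerivAt_prodMk_left (𝕜 := ℝ) p.1 p.2
  have h2 := (hf.hasFDerivAt.comp p.1 h1).hasDerivAt
  exact h2

lemma aux_pd2 (f : ℝ × ℝ → ℝ) (p : ℝ × ℝ) (hf : DifferentiableAt ℝ f p) :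
    HasDerivAt (fun z' => f (p.1, z')) (fderiv ℝ f p (0, 1)) p.2 := by
  have h1 := hasFDerivAt_prodMk_right (𝕜 := ℝ) p.1 p.2
  have h2 := (hf.hasFDerivAt.comp p.2 h1).hasDerivAt
  exact h2

lemma aux_clm (f : ℝ × ℝ → ℝ) (v : ℝ × ℝ) (p : ℝ × ℝ)
    (hf : DifferentiableAt ℝ (fderiv ℝ f) p) :
    HasFDerivAt (fun q => fderiv ℝ f q v) ((fderiv ℝ (fderiv ℝ f) p).flip v) p := by
  have := hf.hasFDerivAt.clm_apply (hasFDerivAt_const v p)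
  simpa using this

lemma aux_swap (f : ℝ × ℝ → ℝ) (hf : ContDiff ℝ 2 f) (p : ℝ × ℝ) :
    fderiv ℝ (fun q => fderiv ℝ f q (1, 0)) p (0, 1)
      = fderiv ℝ (fun q => fderiv ℝ f q (0, 1)) p (1, 0) := by
  have hfd : DifferentiableAt ℝ (fderiv ℝ f) p :=
    (hf.fderiv_right (m := 1) (by norm_num)).differentiable (by norm_num) p
  have h1 := (aux_clm f (1, 0) p hfd).fderiv
  have h2 := (aux_clm f (0, 1) p hfd).fderiv
  have hsym := (hf.contDiffAt (x := p)).isSymmSndFDerivAt (by simp)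
  rw [h1, h2]
  simpa using hsym (0, 1) (1, 0)

lemma aux_alg1 (a b : ℝ) : -(a * b⁻¹) / b ^ 2 = -(a / b ^ 3) := by
  rw [← div_eq_mul_inv, neg_div, div_div]
  congr 2
  ring

lemma aux_alg2 (a b : ℝ) : -(a * b⁻¹) / b ^ 2 = -(a * b⁻¹ ^ 3) := by
  rw [inv_pow, ← div_eq_mul_inv, ← div_eq_mul_inv, neg_div, div_div]
  congr 2
  ring

/-- If `g` is `C²` with `|g'| ≤ C`, `|g''| ≤ C'`, `α` is `C³` and
solves the Doss ODE `∂α/∂z (y,z) = g (α (y,z))`, `α (y,0) = y`, and `h` is a `C²`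
`y`-inverse of `α`, i.e. `α (h (y,z), z) = y`, then
`∂²h/∂y² (y,z) = - ∂²α/∂y² (h (y,z), z) / (∂α/∂y (h (y,z), z))³`, and there is a
constant `C₀ > 0`, depending only on `C` and `C'`, with
`|∂²h/∂y² (y,z)| ≤ exp (C₀|z|)`. -/
theorem stmt_10 (C C' : ℝ) :
    ∃ C₀ > 0, ∀ g : ℝ → ℝ, ContDiff ℝ 2 g →
      (∀ x : ℝ, |deriv g x| ≤ C) → (∀ x : ℝ, |iteratedDeriv 2 g x| ≤ C') →
      ∀ α : ℝ × ℝ → ℝ, ContDiff ℝ 3 α →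
      (∀ y z : ℝ, HasDerivAt (fun z' => α (y, z')) (g (α (y, z))) z) →
      (∀ y : ℝ, α (y, 0) = y) →
      ∀ h : ℝ × ℝ → ℝ, ContDiff ℝ 2 h →
      (∀ y z : ℝ, α (h (y, z), z) = y) →
      ∀ y z : ℝ,
        iteratedDeriv 2 (fun y' => h (y', z)) y =
          -(iteratedDeriv 2 (fun y' => α (y', z)) (h (y, z)) /
            (deriv (fun y' => α (y', z)) (h (y, z))) ^ 3) ∧
        |iteratedDeriv 2 (fun y' => h (y', z)) y| ≤ Real.exp (C₀ * |z|) := by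
  refine ⟨max (7 * C + C') 0 + 1, by positivity, ?_⟩
  intro g hg hgC hgC' α hα hode hinit h hh hinv y z
  have hC : (0:ℝ) ≤ C := le_trans (abs_nonneg _) (hgC 0)
  have hC' : (0:ℝ) ≤ C' := le_trans (abs_nonneg _) (hgC' 0)
  set u : ℝ × ℝ → ℝ := fun p => fderiv ℝ α p (1, 0) with hu_def
  set w : ℝ × ℝ → ℝ := fun p => fderiv ℝ u p (1, 0) with hw_def
  have hαd : Differentiable ℝ α := hα.differentiable (by norm_num)
  have hα2 : ContDiff ℝ 2 α := hα.of_le (by norm_num)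
  have hfα : ContDiff ℝ 2 (fderiv ℝ α) := hα.fderiv_right (m := 2) (by norm_num)
  have hu : ContDiff ℝ 2 u := hfα.clm_apply contDiff_const
  have hud : Differentiable ℝ u := hu.differentiable (by norm_num)
  have hfu : ContDiff ℝ 1 (fderiv ℝ u) := hu.fderiv_right (m := 1) (by norm_num)
  have hw : ContDiff ℝ 1 w := hfu.clm_apply contDiff_const
  have hwd : Differentiable ℝ w := hw.differentiable (by norm_num)
  have hg1 : Differentiable ℝ g := hg.differentiable (by norm_num)
  have hgderiv : ContDiff ℝ 1 (deriv g) := by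
    have h2 : ContDiff ℝ (1 + 1) g := by norm_num; exact hg
    exact (contDiff_succ_iff_deriv.mp h2).2.2
  have hg'd : Differentiable ℝ (deriv g) := hgderiv.differentiable (by norm_num)
  have F1 : ∀ p : ℝ × ℝ, HasDerivAt (fun y' => α (y', p.2)) (u p) p.1 :=
    fun p => aux_pd1 α p (hαd p)
  have F5 : ∀ p : ℝ × ℝ, HasDerivAt (fun y' => u (y', p.2)) (w p) p.1 :=
    fun p => aux_pd1 u p (hud p)
  have F2 : ∀ p : ℝ × ℝ, fderiv ℝ α p (0, 1) = g (α p) := by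
    intro p
    exact (aux_pd2 α p (hαd p)).unique (by simpa using hode p.1 p.2)
  have F3 : ∀ p : ℝ × ℝ,
      fderiv ℝ (fun q => fderiv ℝ α q (0, 1)) p (1, 0) = deriv g (α p) * u p := by
    intro p
    have hgat : HasDerivAt g (deriv g (α p)) (α (p.1, p.2)) := (hg1 (α p)).hasDerivAt
    have hcomp : HasDerivAt (fun y' => g (α (y', p.2))) (deriv g (α p) * u p) p.1 :=
      hgat.comp p.1 (F1 p)
    have hdiff : DifferentiableAt ℝ (fun q => g (α q)) p := (hg1.comp hαd) p
    have hpd := aux_pd1 (fun q => g (α q)) p hdiff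
    have heq : (fun q : ℝ × ℝ => fderiv ℝ α q (0, 1)) = fun q => g (α q) := funext F2
    rw [heq]
    exact hpd.unique hcomp
  have F4eq : ∀ p : ℝ × ℝ, fderiv ℝ u p (0, 1) = deriv g (α p) * u p := by
    intro p
    calc fderiv ℝ u p (0, 1)
        = fderiv ℝ (fun q => fderiv ℝ α q (0, 1)) p (1, 0) := aux_swap α hα2 p
      _ = deriv g (α p) * u p := F3 p
  have F4 : ∀ p : ℝ × ℝ, HasDerivAt (fun z' => u (p.1, z')) (deriv g (α p) * u p) p.2 := by
    intro p
    have := aux_pd2 u p (hud p)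
    rwa [F4eq p] at this
  have F6eq : ∀ p : ℝ × ℝ,
      fderiv ℝ w p (0, 1) = iteratedDeriv 2 g (α p) * u p ^ 2 + deriv g (α p) * w p := by
    intro p
    have hswap := aux_swap u hu p
    have heq : (fun q : ℝ × ℝ => fderiv ℝ u q (0, 1)) = fun q => deriv g (α q) * u q :=
      funext F4eq
    have hgat : HasDerivAt (deriv g) (deriv (deriv g) (α p)) (α (p.1, p.2)) :=
      (hg'd (α p)).hasDerivAt
    have hprod : HasDerivAt (fun y' => deriv g (α (y', p.2)) * u (y', p.2))
        (deriv (deriv g) (α p) * u p * u p + deriv g (α p) * w p) p.1 :=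
      by have := (hgat.comp p.1 (F1 p)).mul (F5 p); exact this
    have hdiff : DifferentiableAt ℝ (fun q => deriv g (α q) * u q) p :=
      ((hg'd.comp hαd).mul hud) p
    have hval : fderiv ℝ (fun q => deriv g (α q) * u q) p (1, 0)
        = deriv (deriv g) (α p) * u p * u p + deriv g (α p) * w p :=
      (aux_pd1 (fun q => deriv g (α q) * u q) p hdiff).unique hprod
    have h2g : iteratedDeriv 2 g = deriv (deriv g) := by
      rw [show (2:ℕ) = 1 + 1 from rfl, iteratedDeriv_succ, iteratedDeriv_one]
    calc fderiv ℝ w p (0, 1)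
        = fderiv ℝ (fun q => fderiv ℝ u q (0, 1)) p (1, 0) := hswap
      _ = fderiv ℝ (fun q => deriv g (α q) * u q) p (1, 0) := by rw [heq]
      _ = iteratedDeriv 2 g (α p) * u p ^ 2 + deriv g (α p) * w p := by
          rw [hval, h2g]; ring
  have F6 : ∀ p : ℝ × ℝ, HasDerivAt (fun z' => w (p.1, z'))
      (iteratedDeriv 2 g (α p) * u p ^ 2 + deriv g (α p) * w p) p.2 := by
    intro p
    have := aux_pd2 w p (hwd p)
    rwa [F6eq p] at this
  have F7 : ∀ t : ℝ, u (t, 0) = 1 := by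
    intro t
    have h1 := F1 (t, 0)
    have h2 : HasDerivAt (fun y' : ℝ => y') (u (t, 0)) t := by
      simpa [hinit] using h1
    exact h2.unique (hasDerivAt_id t)
  have F8 : ∀ t : ℝ, w (t, 0) = 0 := by
    intro t
    have h1 := F5 (t, 0)
    have h2 : HasDerivAt (fun _ : ℝ => (1:ℝ)) (w (t, 0)) t := by
      simpa [F7] using h1
    exact h2.unique (hasDerivAt_const t 1)
  -- the ODE estimates in the z variable, for each fixed first coordinate a
  set φ : ℝ → ℝ → ℝ := fun a s => ∫ t in (0:ℝ)..s, deriv g (α (a, t)) with hφ_def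
  have hcontφ : ∀ a : ℝ, Continuous fun t => deriv g (α (a, t)) := fun a =>
    (hg.continuous_deriv (by norm_num)).comp
      (hα.continuous.comp (continuous_const.prodMk continuous_id))
  have hφd : ∀ a s : ℝ, HasDerivAt (φ a) (deriv g (α (a, s))) s := fun a s =>
    ((hcontφ a).integral_hasStrictDerivAt 0 s).hasDerivAt
  have hφ0 : ∀ a : ℝ, φ a 0 = 0 := fun a => intervalIntegral.integral_same
  have hφb : ∀ a s : ℝ, |φ a s| ≤ C * |s| := by
    intro a s
    have := intervalIntegral.norm_integral_le_of_norm_le_const (a := 0) (b := s)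
      (C := C) (f := fun t => deriv g (α (a, t))) (fun x _ => hgC _)
    simpa using this
  have Uexp : ∀ a s : ℝ, u (a, s) = Real.exp (φ a s) := by
    intro a s
    have hG : ∀ t : ℝ, HasDerivAt (fun r => u (a, r) * Real.exp (-(φ a r))) 0 t := by
      intro t
      have h1 : HasDerivAt (fun r => u (a, r)) (deriv g (α (a, t)) * u (a, t)) t := F4 (a, t)
      have h2 : HasDerivAt (fun r => Real.exp (-(φ a r)))
          (Real.exp (-(φ a t)) * -(deriv g (α (a, t)))) t := ((hφd a t).neg).exp
      have h3 : HasDerivAt (fun r => u (a, r) * Real.exp (-(φ a r))) _ t := h1.mul h2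
      convert h3 using 1
      ring
    have hGd : Differentiable ℝ fun r => u (a, r) * Real.exp (-(φ a r)) :=
      fun t => (hG t).differentiableAt
    have hGc := is_const_of_deriv_eq_zero hGd (fun t => (hG t).deriv) s 0
    rw [hφ0, F7] at hGc
    simp only [neg_zero, Real.exp_zero, mul_one, one_mul] at hGc
    rw [Real.exp_neg] at hGc
    field_simp at hGc
    exact hGc
  have Upos : ∀ a s : ℝ, 0 < u (a, s) := fun a s => by
    rw [Uexp]; exact Real.exp_pos _
  have Uhi : ∀ a s : ℝ, u (a, s) ≤ Real.exp (C * |s|) := by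
    intro a s
    rw [Uexp]
    exact Real.exp_le_exp.mpr (le_trans (le_abs_self _) (hφb a s))
  have Uinv : ∀ a s : ℝ, (u (a, s))⁻¹ ≤ Real.exp (C * |s|) := by
    intro a s
    rw [Uexp, ← Real.exp_neg]
    exact Real.exp_le_exp.mpr (by linarith [(abs_le.mp (hφb a s)).1])
  have Wb : ∀ a s : ℝ, |w (a, s)| ≤ C' * Real.exp (3 * (C * |s|)) * |s| * Real.exp (C * |s|) := by
    intro a s
    have habs : ∀ x ∈ Set.uIcc (0:ℝ) s, |x| ≤ |s| := by
      intro x hx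
      rcases le_total 0 s with hs | hs
      · rw [Set.uIcc_of_le hs] at hx
        rw [abs_of_nonneg hx.1, abs_of_nonneg hs]; exact hx.2
      · rw [Set.uIcc_of_ge hs] at hx
        rw [abs_of_nonpos hx.2, abs_of_nonpos hs]; linarith [hx.1]
    have hVd : ∀ t : ℝ, HasDerivAt (fun r => w (a, r) * Real.exp (-(φ a r)))
        (iteratedDeriv 2 g (α (a, t)) * u (a, t) ^ 2 * Real.exp (-(φ a t))) t := by
      intro t
      have h1 := F6 (a, t)
      have h2 : HasDerivAt (fun r => Real.exp (-(φ a r)))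
          (Real.exp (-(φ a t)) * -(deriv g (α (a, t)))) t := ((hφd a t).neg).exp
      have h3 : HasDerivAt (fun r => w (a, r) * Real.exp (-(φ a r))) _ t := h1.mul h2
      convert h3 using 1
      ring
    have hbound : ∀ x ∈ Set.uIcc (0:ℝ) s,
        ‖iteratedDeriv 2 g (α (a, x)) * u (a, x) ^ 2 * Real.exp (-(φ a x))‖
          ≤ C' * Real.exp (3 * (C * |s|)) := by
      intro x hx
      have hx' := habs x hx
      have hCx : C * |x| ≤ C * |s| := by nlinarith
      have e1 : |iteratedDeriv 2 g (α (a, x))| ≤ C' := hgC' _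
      have p2 : (0:ℝ) ≤ u (a, x) ^ 2 := sq_nonneg _
      have p3 : (0:ℝ) ≤ Real.exp (-(φ a x)) := (Real.exp_pos _).le
      have e2 : u (a, x) ^ 2 ≤ Real.exp (C * |s|) ^ 2 := by
        have hx2 : u (a, x) ≤ Real.exp (C * |s|) :=
          (Uhi a x).trans (Real.exp_le_exp.mpr hCx)
        nlinarith [(Upos a x).le]
      have e3 : Real.exp (-(φ a x)) ≤ Real.exp (C * |s|) := by
        apply Real.exp_le_exp.mpr
        linarith [(abs_le.mp (hφb a x)).1]
      rw [Real.norm_eq_abs, abs_mul, abs_mul, abs_of_nonneg (sq_nonneg (u (a, x))),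
        abs_of_pos (Real.exp_pos _)]
      have hstep1 : |iteratedDeriv 2 g (α (a, x))| * u (a, x) ^ 2
          ≤ C' * Real.exp (C * |s|) ^ 2 := mul_le_mul e1 e2 p2 hC'
      have hmain : |iteratedDeriv 2 g (α (a, x))| * u (a, x) ^ 2 * Real.exp (-(φ a x))
          ≤ C' * Real.exp (C * |s|) ^ 2 * Real.exp (C * |s|) :=
        mul_le_mul hstep1 e3 p3 (by positivity)
      have hexp3 : Real.exp (C * |s|) ^ 2 * Real.exp (C * |s|) = Real.exp (3 * (C * |s|)) := by
        rw [← Real.exp_nat_mul, ← Real.exp_add]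
        congr 1
        push_cast
        ring
      calc |iteratedDeriv 2 g (α (a, x))| * u (a, x) ^ 2 * Real.exp (-(φ a x))
          ≤ C' * Real.exp (C * |s|) ^ 2 * Real.exp (C * |s|) := hmain
        _ = C' * Real.exp (3 * (C * |s|)) := by rw [mul_assoc, hexp3]
    have hmvt := Convex.norm_image_sub_le_of_norm_hasDerivWithin_le
      (f := fun r => w (a, r) * Real.exp (-(φ a r)))
      (fun x _ => (hVd x).hasDerivWithinAt) hbound (convex_uIcc 0 s)
      Set.left_mem_uIcc Set.right_mem_uIcc
    simp only [hφ0, F8, neg_zero, Real.exp_zero, zero_mul, mul_one, sub_zero,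
      Real.norm_eq_abs] at hmvt
    rw [abs_mul, abs_of_pos (Real.exp_pos _)] at hmvt
    have hφs : Real.exp (φ a s) ≤ Real.exp (C * |s|) :=
      Real.exp_le_exp.mpr (le_trans (le_abs_self _) (hφb a s))
    have hkey : |w (a, s)| = |w (a, s)| * Real.exp (-(φ a s)) * Real.exp (φ a s) := by
      rw [mul_assoc, ← Real.exp_add]; simp
    rw [hkey]
    exact mul_le_mul hmvt hφs (Real.exp_pos _).le (by positivity)
  -- inverse-function part
  have hhd : Differentiable ℝ h := hh.differentiable (by norm_num)
  set x := h (y, z) with hx_def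
  have Hder : ∀ y' : ℝ, HasDerivAt (fun t => h (t, z)) (fderiv ℝ h (y', z) (1, 0)) y' :=
    fun y' => aux_pd1 h (y', z) (hhd _)
  have chain : ∀ y' : ℝ, u (h (y', z), z) * fderiv ℝ h (y', z) (1, 0) = 1 := by
    intro y'
    have h1 : HasDerivAt (fun t => α (t, z)) (u (h (y', z), z)) (h (y', z)) := F1 (h (y', z), z)
    have h2 := h1.comp y' (Hder y')
    have heq : ((fun t => α (t, z)) ∘ fun t => h (t, z)) = fun t : ℝ => t :=
      funext fun t => hinv t z
    rw [heq] at h2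
    exact h2.unique (hasDerivAt_id y')
  have ηval : ∀ y' : ℝ, fderiv ℝ h (y', z) (1, 0) = (u (h (y', z), z))⁻¹ := by
    intro y'
    have hup : u (h (y', z), z) ≠ 0 := (Upos _ _).ne'
    rw [inv_eq_one_div, eq_div_iff hup]
    linarith [chain y']
  have derivH : deriv (fun t => h (t, z)) = fun y' => (u (h (y', z), z))⁻¹ := by
    funext y'; rw [(Hder y').deriv, ηval y']
  have hUx : 0 < u (x, z) := Upos x z
  have hcomp2 : HasDerivAt (fun y' => u (h (y', z), z)) (w (x, z) * (u (x, z))⁻¹) y := by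
    have h1 : HasDerivAt (fun t => u (t, z)) (w (x, z)) x := F5 (x, z)
    have h2 := h1.comp y (Hder y)
    rw [ηval y] at h2
    exact h2
  have hinvD : HasDerivAt (fun y' => (u (h (y', z), z))⁻¹)
      (-(w (x, z) * (u (x, z))⁻¹) / u (x, z) ^ 2) y :=
    hcomp2.inv hUx.ne'
  have derivA : deriv (fun t => α (t, z)) = fun t => u (t, z) :=
    funext fun t => (F1 (t, z)).deriv
  have iA : iteratedDeriv 2 (fun t => α (t, z)) x = w (x, z) := by
    rw [show (2:ℕ) = 1 + 1 from rfl, iteratedDeriv_succ, iteratedDeriv_one, derivA]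
    exact (F5 (x, z)).deriv
  have iH : iteratedDeriv 2 (fun t => h (t, z)) y
      = -(w (x, z) * (u (x, z))⁻¹) / u (x, z) ^ 2 := by
    rw [show (2:ℕ) = 1 + 1 from rfl, iteratedDeriv_succ, iteratedDeriv_one, derivH]
    exact hinvD.deriv
  have hAx : deriv (fun t => α (t, z)) x = u (x, z) := by rw [derivA]
  have hune : u (x, z) ≠ 0 := hUx.ne'
  constructor
  · rw [iH, iA, hAx]
    exact aux_alg1 _ _
  · have iH' : iteratedDeriv 2 (fun t => h (t, z)) y
        = -(w (x, z) * ((u (x, z))⁻¹) ^ 3) := by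
      rw [iH]
      exact aux_alg2 _ _
    rw [iH', abs_neg, abs_mul, abs_of_nonneg (by positivity : (0:ℝ) ≤ ((u (x, z))⁻¹) ^ 3)]
    have b1 : |w (x, z)| ≤ C' * Real.exp (3 * (C * |z|)) * |z| * Real.exp (C * |z|) := Wb x z
    have b2 : ((u (x, z))⁻¹) ^ 3 ≤ Real.exp (C * |z|) ^ 3 := by
      have hle := Uinv x z
      have hnn : (0:ℝ) ≤ (u (x, z))⁻¹ := by positivity
      exact pow_le_pow_left₀ hnn hle 3
    have h7 : Real.exp (3 * (C * |z|)) * Real.exp (C * |z|) * Real.exp (C * |z|) ^ 3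
        = Real.exp (7 * (C * |z|)) := by
      rw [← Real.exp_nat_mul, ← Real.exp_add, ← Real.exp_add]
      congr 1
      push_cast
      ring
    calc |w (x, z)| * ((u (x, z))⁻¹) ^ 3
        ≤ (C' * Real.exp (3 * (C * |z|)) * |z| * Real.exp (C * |z|))
            * Real.exp (C * |z|) ^ 3 := by
          apply mul_le_mul b1 b2 (by positivity) (by positivity)
      _ = (C' * |z|) * Real.exp (7 * (C * |z|)) := by rw [← h7]; ring
      _ ≤ Real.exp (C' * |z|) * Real.exp (7 * (C * |z|)) := by
          apply mul_le_mul_of_nonneg_right _ (Real.exp_pos _).le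
          have := Real.add_one_le_exp (C' * |z|)
          linarith
      _ = Real.exp ((7 * C + C') * |z|) := by
          rw [← Real.exp_add]; congr 1; ring
      _ ≤ Real.exp ((max (7 * C + C') 0 + 1) * |z|) := by
          apply Real.exp_le_exp.mpr
          apply mul_le_mul_of_nonneg_right _ (abs_nonneg z)
          have := le_max_left (7 * C + C') 0
          linarith
end

section
/- Let a, b > 0 with a + b > 1, let T > 0, and let x, y : ℝ → ℝ be Hölder continuous with exponents a and b respectively. For ε > 0 set C_ε(x,y)(t) = (1/ε)·∫₀ᵗ (x(s) − x(s−ε))·(y(s) − y(s−ε)) ds. Then sup_{t∈[0,T]} |C_ε(x,y)(t)| → 0 as ε → 0⁺. -/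
/-- If `x` is `a`-Hölder continuous, `y` is `b`-Hölder continuous,
with `a, b > 0` and `a + b > 1`, then
`C_ε(x,y)(t) = ε⁻¹ ∫₀ᵗ (x s - x (s-ε)) (y s - y (s-ε)) ds` converges to `0`
uniformly on `[0,T]` as `ε → 0⁺`. -/
theorem stmt_11 (a b T : ℝ) (ha : 0 < a) (hb : 0 < b) (hab : 1 < a + b) (hT : 0 < T)
    (x y : ℝ → ℝ) (Kx Ky : ℝ)
    (hx : ∀ s t : ℝ, |x s - x t| ≤ Kx * |s - t| ^ a)
    (hy : ∀ s t : ℝ, |y s - y t| ≤ Ky * |s - t| ^ b) :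
    TendstoUniformlyOn
      (fun ε t => ε⁻¹ * ∫ s in (0:ℝ)..t, (x s - x (s - ε)) * (y s - y (s - ε)))
      0 (nhdsWithin 0 (Set.Ioi 0)) (Set.Icc 0 T) := by
  have hKx : 0 ≤ Kx := by
    have := hx 1 0
    simpa using le_trans (abs_nonneg _) this
  have hKy : 0 ≤ Ky := by
    have := hy 1 0
    simpa using le_trans (abs_nonneg _) this
  -- the bounding function
  have hbnd : Filter.Tendsto (fun ε : ℝ => Kx * Ky * T * ε ^ (a + b - 1))
      (nhdsWithin 0 (Set.Ioi 0)) (nhds 0) := by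
    have h1 : Filter.Tendsto (fun ε : ℝ => ε ^ (a + b - 1)) (nhds 0) (nhds 0) := by
      have := (Real.continuousAt_rpow_const 0 (a + b - 1)
        (Or.inr (by linarith))).tendsto
      simpa [Real.zero_rpow (show a + b - 1 ≠ 0 from (by linarith : (0:ℝ) < a + b - 1).ne')] using this
    have h2 := (h1.const_mul (Kx * Ky * T)).mono_left
      (nhdsWithin_le_nhds (s := Set.Ioi 0))
    simpa using h2
  rw [Metric.tendstoUniformlyOn_iff]
  intro δ hδ
  have hev : ∀ᶠ ε : ℝ in nhdsWithin 0 (Set.Ioi 0),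
      Kx * Ky * T * ε ^ (a + b - 1) < δ :=
    hbnd.eventually (Filter.Tendsto.eventually_lt_const hδ Filter.tendsto_id)
  filter_upwards [hev, self_mem_nhdsWithin] with ε hεδ hε t ht
  have hε : (0:ℝ) < ε := hε
  have key : ∀ s : ℝ, |(x s - x (s - ε)) * (y s - y (s - ε))| ≤
      Kx * Ky * ε ^ (a + b) := by
    intro s
    rw [abs_mul]
    have h1 : |x s - x (s - ε)| ≤ Kx * ε ^ a := by
      have := hx s (s - ε)
      simpa [abs_of_pos hε] using this
    have h2 : |y s - y (s - ε)| ≤ Ky * ε ^ b := by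
      have := hy s (s - ε)
      simpa [abs_of_pos hε] using this
    calc |x s - x (s - ε)| * |y s - y (s - ε)| ≤ (Kx * ε ^ a) * (Ky * ε ^ b) :=
          mul_le_mul h1 h2 (abs_nonneg _) (by positivity)
      _ = Kx * Ky * ε ^ (a + b) := by
          rw [Real.rpow_add hε]; ring
  have hint : |∫ s in (0:ℝ)..t, (x s - x (s - ε)) * (y s - y (s - ε))| ≤
      Kx * Ky * ε ^ (a + b) * |t - 0| := by
    have := intervalIntegral.norm_integral_le_of_norm_le_const
      (f := fun s => (x s - x (s - ε)) * (y s - y (s - ε)))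
      (C := Kx * Ky * ε ^ (a + b)) (a := 0) (b := t)
      (fun s _ => by rw [Real.norm_eq_abs]; exact key s)
    simpa [Real.norm_eq_abs] using this
  have htT : |t - 0| ≤ T := by
    rw [sub_zero, abs_of_nonneg ht.1]; exact ht.2
  have hfin : |ε⁻¹ * ∫ s in (0:ℝ)..t, (x s - x (s - ε)) * (y s - y (s - ε))| ≤
      Kx * Ky * T * ε ^ (a + b - 1) := by
    rw [abs_mul, abs_of_pos (inv_pos.mpr hε)]
    calc ε⁻¹ * |∫ s in (0:ℝ)..t, (x s - x (s - ε)) * (y s - y (s - ε))|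
        ≤ ε⁻¹ * (Kx * Ky * ε ^ (a + b) * T) := by
          apply mul_le_mul_of_nonneg_left _ (inv_nonneg.mpr hε.le)
          exact hint.trans (by
            apply mul_le_mul_of_nonneg_left htT (by positivity))
      _ = Kx * Ky * T * ε ^ (a + b - 1) := by
          rw [Real.rpow_sub hε, Real.rpow_one]
          field_simp
  calc dist 0 (ε⁻¹ * ∫ s in (0:ℝ)..t, (x s - x (s - ε)) * (y s - y (s - ε)))
      = |ε⁻¹ * ∫ s in (0:ℝ)..t, (x s - x (s - ε)) * (y s - y (s - ε))| := by
        rw [Real.dist_eq, zero_sub, abs_neg]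
    _ ≤ Kx * Ky * T * ε ^ (a + b - 1) := hfin
    _ < δ := hεδ
end

section
/- Let T > 0 and let x, y : ℝ → ℝ be continuous. For ε > 0 set C_ε(x,y)(t) = (1/ε)·∫₀ᵗ (x(s) − x(s−ε))·(y(s) − y(s−ε)) ds. Then: (i) for all ε > 0 and all t ∈ [0,T], |C_ε(x,y)(t)| ≤ (C_ε(x,x)(T))^{1/2} · (C_ε(y,y)(T))^{1/2}; (ii) if there is M > 0 with C_ε(x,x)(T) ≤ M for all ε ∈ (0,1], and C_ε(y,y)(T) → 0 as ε → 0⁺, then sup_{t∈[0,T]} |C_ε(x,y)(t)| → 0 as ε → 0⁺. -/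
open MeasureTheory Set Filter

lemma memL2_of_cont (f : ℝ → ℝ) (hf : Continuous f) (a b : ℝ) :
    MemLp f (ENNReal.ofReal 2) (volume.restrict (Ioc a b)) := by
  haveI : IsFiniteMeasure (volume.restrict (Ioc a b)) :=
    ⟨by simp [Measure.restrict_apply_univ, Real.volume_Ioc]⟩
  obtain ⟨C, hC⟩ := (isCompact_Icc (a := a) (b := b)).exists_bound_of_continuousOn
    hf.continuousOn
  refine memLp_of_bounded (a := -C) (b := C) ?_ hf.aestronglyMeasurable _
  filter_upwards [ae_restrict_mem measurableSet_Ioc] with s hs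
  have := hC s (Ioc_subset_Icc_self hs)
  rw [Real.norm_eq_abs, abs_le] at this
  exact this

lemma cs_interval (f g : ℝ → ℝ) (hf : Continuous f) (hg : Continuous g)
    {a b : ℝ} (hab : a ≤ b) :
    |∫ s in a..b, f s * g s| ≤
      Real.sqrt (∫ s in a..b, f s ^ 2) * Real.sqrt (∫ s in a..b, g s ^ 2) := by
  rw [intervalIntegral.integral_of_le hab, intervalIntegral.integral_of_le hab,
    intervalIntegral.integral_of_le hab]
  set μ := volume.restrict (Ioc a b)
  have h2 : (2:ℝ).HolderConjugate 2 := by constructor <;> norm_num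
  have hfg : |∫ s, f s * g s ∂μ| ≤ ∫ s, ‖f s‖ * ‖g s‖ ∂μ := by
    have := norm_integral_le_integral_norm (μ := μ) (f := fun s => f s * g s)
    rw [Real.norm_eq_abs] at this
    refine this.trans_eq (integral_congr_ae (Eventually.of_forall fun s => ?_))
    simp [abs_mul]
  refine hfg.trans ?_
  have key := integral_mul_norm_le_Lp_mul_Lq (μ := μ) h2
    (memL2_of_cont f hf a b) (memL2_of_cont g hg a b)
  have hsq : ∀ (h : ℝ → ℝ), (∫ s, ‖h s‖ ^ (2:ℝ) ∂μ) = ∫ s, h s ^ 2 ∂μ := by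
    intro h
    refine integral_congr_ae (Eventually.of_forall fun s => ?_)
    show ‖h s‖ ^ (2:ℝ) = h s ^ 2
    rw [Real.norm_eq_abs, show (2:ℝ) = ((2:ℕ):ℝ) by norm_num, Real.rpow_natCast, sq_abs]
  rw [hsq, hsq] at key
  refine key.trans_eq ?_
  rw [Real.sqrt_eq_rpow, Real.sqrt_eq_rpow]



/-- The approximate covariation `C_ε(x,y)(t) = ε⁻¹ ∫₀ᵗ (x s - x (s-ε)) (y s - y (s-ε)) ds`
of Russo and Vallois. -/
noncomputable def quadCov (x y : ℝ → ℝ) (ε t : ℝ) : ℝ :=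
  ε⁻¹ * ∫ s in (0:ℝ)..t, (x s - x (s - ε)) * (y s - y (s - ε))

/-- For continuous `x, y : ℝ → ℝ`:
(i) `|C_ε(x,y)(t)| ≤ √(C_ε(x,x)(T)) √(C_ε(y,y)(T))` for `ε > 0` and `t ∈ [0,T]`;
(ii) if `C_ε(x,x)(T)` is bounded for `ε ∈ (0,1]` and `C_ε(y,y)(T) → 0` as `ε → 0⁺`,
then `C_ε(x,y)` converges to `0` uniformly on `[0,T]` as `ε → 0⁺`. -/
theorem stmt_12 (T : ℝ) (hT : 0 < T) (x y : ℝ → ℝ)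
    (hx : Continuous x) (hy : Continuous y) :
    (∀ ε > (0:ℝ), ∀ t ∈ Set.Icc (0:ℝ) T,
      |quadCov x y ε t| ≤ Real.sqrt (quadCov x x ε T) * Real.sqrt (quadCov y y ε T)) ∧
    (∀ M > (0:ℝ), (∀ ε ∈ Set.Ioc (0:ℝ) 1, quadCov x x ε T ≤ M) →
      Filter.Tendsto (fun ε => quadCov y y ε T) (nhdsWithin 0 (Set.Ioi 0)) (nhds 0) →
      TendstoUniformlyOn (fun ε t => quadCov x y ε t) 0
        (nhdsWithin 0 (Set.Ioi 0)) (Set.Icc 0 T)) := by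
  have key : ∀ ε > (0:ℝ), ∀ t ∈ Set.Icc (0:ℝ) T,
      |quadCov x y ε t| ≤ Real.sqrt (quadCov x x ε T) * Real.sqrt (quadCov y y ε T) := by
    intro ε hε t ht
    set f : ℝ → ℝ := fun s => x s - x (s - ε) with hfdef
    set g : ℝ → ℝ := fun s => y s - y (s - ε) with hgdef
    have hfc : Continuous f := hx.sub (hx.comp (continuous_id.sub continuous_const))
    have hgc : Continuous g := hy.sub (hy.comp (continuous_id.sub continuous_const))
    have hself : ∀ (h : ℝ → ℝ), quadCov h h ε T
        = ε⁻¹ * ∫ s in (0:ℝ)..T, (h s - h (s - ε)) ^ 2 := by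
      intro h
      unfold quadCov
      congr 1
      exact intervalIntegral.integral_congr fun s _ => (sq _).symm
    have hsqint : ∀ (h : ℝ → ℝ), Continuous h → ∀ u v : ℝ,
        IntervalIntegrable (fun s => (h s - h (s - ε)) ^ 2) volume u v := fun h hc u v =>
      ((hc.sub (hc.comp (continuous_id.sub continuous_const))).pow 2).intervalIntegrable u v
    -- monotonicity of ∫ f² from t to T
    have hmono : ∀ (h : ℝ → ℝ), Continuous h →
        (∫ s in (0:ℝ)..t, (h s - h (s - ε)) ^ 2) ≤ ∫ s in (0:ℝ)..T, (h s - h (s - ε)) ^ 2 := by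
      intro h hc
      refine intervalIntegral.integral_mono_interval le_rfl ht.1 ht.2
        (Eventually.of_forall fun s => sq_nonneg _) (hsqint h hc 0 T)
    have hCS := cs_interval f g hfc hgc ht.1
    have hnn : ∀ (h : ℝ → ℝ), Continuous h →
        (0:ℝ) ≤ ∫ s in (0:ℝ)..T, (h s - h (s - ε)) ^ 2 := by
      intro h hc
      exact intervalIntegral.integral_nonneg hT.le fun s _ => sq_nonneg _
    calc |quadCov x y ε t| = ε⁻¹ * |∫ s in (0:ℝ)..t, f s * g s| := by
          rw [quadCov, abs_mul, abs_of_nonneg (inv_nonneg.2 hε.le)]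
      _ ≤ ε⁻¹ * (Real.sqrt (∫ s in (0:ℝ)..t, f s ^ 2) * Real.sqrt (∫ s in (0:ℝ)..t, g s ^ 2)) :=
          mul_le_mul_of_nonneg_left hCS (inv_nonneg.2 hε.le)
      _ ≤ ε⁻¹ * (Real.sqrt (∫ s in (0:ℝ)..T, f s ^ 2) * Real.sqrt (∫ s in (0:ℝ)..T, g s ^ 2)) := by
          refine mul_le_mul_of_nonneg_left
            (mul_le_mul (Real.sqrt_le_sqrt (hmono x hx)) (Real.sqrt_le_sqrt (hmono y hy))
              (Real.sqrt_nonneg _) (Real.sqrt_nonneg _)) (inv_nonneg.2 hε.le)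
      _ = Real.sqrt (quadCov x x ε T) * Real.sqrt (quadCov y y ε T) := by
          have hqx : quadCov x x ε T = ε⁻¹ * ∫ s in (0:ℝ)..T, f s ^ 2 := hself x
          have hqy : quadCov y y ε T = ε⁻¹ * ∫ s in (0:ℝ)..T, g s ^ 2 := hself y
          rw [hqx, hqy, Real.sqrt_mul (inv_nonneg.2 hε.le),
            Real.sqrt_mul (inv_nonneg.2 hε.le), mul_mul_mul_comm,
            Real.mul_self_sqrt (inv_nonneg.2 hε.le)]
  refine ⟨key, ?_⟩
  intro M hM hbdd hyy
  have hyynn : ∀ ε > (0:ℝ), 0 ≤ quadCov y y ε T := by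
    intro ε hε
    have : quadCov y y ε T = ε⁻¹ * ∫ s in (0:ℝ)..T, (y s - y (s - ε)) ^ 2 := by
      unfold quadCov; congr 1
      exact intervalIntegral.integral_congr fun s _ => (sq _).symm
    rw [this]
    exact mul_nonneg (inv_nonneg.2 hε.le)
      (intervalIntegral.integral_nonneg hT.le fun s _ => sq_nonneg _)
  have hsqrt : Filter.Tendsto (fun ε => Real.sqrt M * Real.sqrt (quadCov y y ε T))
      (nhdsWithin 0 (Set.Ioi 0)) (nhds 0) := by
    have h1 : Filter.Tendsto (fun ε => Real.sqrt (quadCov y y ε T))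
        (nhdsWithin 0 (Set.Ioi 0)) (nhds 0) := by
      have := (Real.continuous_sqrt.tendsto 0).comp hyy
      simpa [Real.sqrt_zero, Function.comp_def] using this
    simpa using tendsto_const_nhds.mul h1
  rw [Metric.tendstoUniformlyOn_iff]
  intro δ hδ
  filter_upwards [hsqrt.eventually_lt_const hδ,
    Ioc_mem_nhdsGT_of_mem (Set.mem_Ico.2 ⟨le_refl (0:ℝ), zero_lt_one⟩)] with ε h1 h2
  intro t ht
  have hε : 0 < ε := h2.1
  have hxle : Real.sqrt (quadCov x x ε T) ≤ Real.sqrt M :=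
    Real.sqrt_le_sqrt (hbdd ε h2)
  have := key ε hε t ht
  calc dist ((0 : ℝ → ℝ) t) (quadCov x y ε t) = |quadCov x y ε t| := by
        simp [Real.dist_eq, abs_sub_comm]
    _ ≤ Real.sqrt (quadCov x x ε T) * Real.sqrt (quadCov y y ε T) := this
    _ ≤ Real.sqrt M * Real.sqrt (quadCov y y ε T) :=
        mul_le_mul_of_nonneg_right hxle (Real.sqrt_nonneg _)
    _ < δ := h1
end

section
/- Let T > 0, let x : ℝ → ℝ be continuous, and let q : ℝ → ℝ be a nondecreasing continuous function with q(0) = 0 such that sup_{t∈[0,T]} | (1/ε)·∫₀ᵗ (x(s) − x(s−ε))² ds − q(t) | → 0 as ε → 0⁺. Let f : ℝ → ℝ be twice continuously differentiable. Then sup_{t∈[0,T]} | (1/ε)·∫₀ᵗ f′(x(s))·(x(s) − x(s−ε)) ds − ( f(x(t)) − f(x(0)) + (1/2)·∫_{(0,t]} f″(x(s)) dq(s) ) | → 0 as ε → 0⁺, where ∫_{(0,t]} · dq denotes the Lebesgue–Stieltjes integral with respect to q. In particular, the backward Russo–Vallois integral ∫₀ᵗ f′(x(s)) dx(s) exists and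 equals f(x(t)) − f(x(0)) + (1/2)∫_{(0,t]} f″(x(s)) dq(s). -/
open MeasureTheory
open intervalIntegral

set_option maxHeartbeats 2000000

/- The Lebesgue–Stieltjes integral `∫_{(0,t]} h dq` of `h` with respect to a
nondecreasing (right-)continuous function `q`, with junk value `0` otherwise. -/
open Classical in
noncomputable def lsIntegral (q h : ℝ → ℝ) (t : ℝ) : ℝ :=
  if hq : Monotone q ∧ ∀ x : ℝ, ContinuousWithinAt q (Set.Ici x) x then
    ∫ s in Set.Ioc (0:ℝ) t, h s ∂(StieltjesFunction.mk q hq.1 hq.2).measure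
  else 0

section helpers

lemma mem_uIcc_abs {a b v : ℝ} (hv : v ∈ Set.uIcc a b) : |v - a| ≤ |b - a| := by
  rcases Set.mem_uIcc.mp hv with ⟨h1, h2⟩ | ⟨h1, h2⟩ <;> rw [abs_le] <;> constructor <;>
    nlinarith [le_abs_self (b - a), neg_abs_le (b - a)]

lemma unif_cont (φ : ℝ → ℝ) (hφ : Continuous φ) (a b δ : ℝ) (hδ : 0 < δ) :
    ∃ ρ > (0:ℝ), ∀ u ∈ Set.Icc a b, ∀ v ∈ Set.Icc a b, |u - v| ≤ ρ → |φ u - φ v| ≤ δ := by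
  have h := (isCompact_Icc (a := a) (b := b)).uniformContinuousOn_of_continuous
    hφ.continuousOn
  rw [Metric.uniformContinuousOn_iff] at h
  obtain ⟨ρ, hρ, H⟩ := h δ hδ
  refine ⟨ρ / 2, by positivity, fun u hu v hv hd => ?_⟩
  have := H u hu v hv (by rw [Real.dist_eq]; linarith)
  rw [Real.dist_eq] at this
  exact this.le

lemma bound_cont (φ : ℝ → ℝ) (hφ : Continuous φ) (a b : ℝ) :
    ∃ M : ℝ, 0 ≤ M ∧ ∀ s ∈ Set.Icc a b, |φ s| ≤ M := by
  obtain ⟨C, hC⟩ := (isCompact_Icc (a := a) (b := b)).exists_bound_of_continuousOn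
    hφ.continuousOn
  exact ⟨max C 0, le_max_right _ _, fun s hs => (hC s hs).trans (le_max_left _ _)⟩

end helpers


lemma taylor_aux (f : ℝ → ℝ) (hd1 : Differentiable ℝ f) (hd2 : Differentiable ℝ (deriv f))
    (hc2 : Continuous (deriv (deriv f))) (a b : ℝ) (δ : ℝ)
    (hδ : ∀ v ∈ Set.uIcc a b, |deriv (deriv f) v - deriv (deriv f) a| ≤ δ) :
    |f b - f a - deriv f a * (b - a) - (1/2) * deriv (deriv f) a * (b - a)^2|
      ≤ δ * (b - a)^2 := by
  set f' := deriv f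
  set f'' := deriv f'
  have hc1 : Continuous f' := hd2.continuous
  have h1 : ∫ u in a..b, f' u = f b - f a :=
    integral_deriv_eq_sub (fun u _ => hd1 u) (hc1.intervalIntegrable a b)
  have h2 : ∀ u : ℝ, ∫ v in a..u, f'' v = f' u - f' a := fun u =>
    integral_deriv_eq_sub (fun v _ => hd2 v) (hc2.intervalIntegrable a u)
  have h3 : ∫ u in a..b, (u - a) = (b - a)^2 / 2 := by
    have := intervalIntegral.integral_comp_sub_right (a := a) (b := b) (fun u => u) a
    rw [this]
    simp [integral_id]
  have key : f b - f a - f' a * (b - a) - (1/2) * f'' a * (b - a)^2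
      = ∫ u in a..b, (f' u - f' a - f'' a * (u - a)) := by
    have ha : IntervalIntegrable (fun u : ℝ => f' u - f' a) volume a b :=
      Continuous.intervalIntegrable (by continuity) a b
    have hb : IntervalIntegrable (fun u : ℝ => f'' a * (u - a)) volume a b :=
      Continuous.intervalIntegrable (by continuity) a b
    have ha' : IntervalIntegrable (fun u : ℝ => f' u) volume a b :=
      hc1.intervalIntegrable a b
    rw [intervalIntegral.integral_sub ha hb,
      intervalIntegral.integral_sub ha' (continuous_const.intervalIntegrable a b),
      h1, intervalIntegral.integral_const_mul, h3]
    simp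
    ring
  rw [key]
  have hbnd : ∀ u ∈ Set.uIcc a b, |f' u - f' a - f'' a * (u - a)| ≤ δ * |b - a| := by
    intro u hu
    have hrw : f' u - f' a - f'' a * (u - a) = ∫ v in a..u, (f'' v - f'' a) := by
      rw [intervalIntegral.integral_sub (hc2.intervalIntegrable a u)
        (continuous_const.intervalIntegrable a u), h2]
      simp
      ring
    rw [hrw]
    have hsub : Set.uIcc a u ⊆ Set.uIcc a b :=
      Set.uIcc_subset_uIcc Set.left_mem_uIcc hu
    have hn : ‖∫ v in a..u, (f'' v - f'' a)‖ ≤ δ * |u - a| :=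
      intervalIntegral.norm_integral_le_of_norm_le_const (fun v hv => by
        exact hδ v (hsub (Set.uIoc_subset_uIcc hv)))
    rw [Real.norm_eq_abs] at hn
    refine hn.trans ?_
    have hδ0 : 0 ≤ δ := le_trans (abs_nonneg _) (hδ a Set.left_mem_uIcc)
    have hle : |u - a| ≤ |b - a| := by
      rcases Set.mem_uIcc.mp hu with ⟨h1', h2'⟩ | ⟨h1', h2'⟩ <;> rw [abs_le] <;>
        constructor <;> nlinarith [le_abs_self (b - a), neg_abs_le (b - a)]
    nlinarith
  have := intervalIntegral.norm_integral_le_of_norm_le_const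
    (C := δ * |b - a|) (f := fun u => f' u - f' a - f'' a * (u - a)) (a := a) (b := b)
    (fun u hu => hbnd u (Set.uIoc_subset_uIcc hu))
  rw [Real.norm_eq_abs] at this
  refine this.trans (le_of_eq ?_)
  rw [mul_assoc, ← abs_mul, ← sq, abs_of_nonneg (sq_nonneg _)]


-- shift identity
lemma shift_int (F : ℝ → ℝ) (hF : Continuous F) (t ε : ℝ) :
    ∫ s in (0:ℝ)..t, (F s - F (s - ε))
      = (∫ s in (t-ε)..t, F s) - ∫ s in (-ε)..(0:ℝ), F s := by
  have hi : ∀ a b : ℝ, IntervalIntegrable F volume a b := fun a b =>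
    hF.intervalIntegrable a b
  have h0 : ∫ s in (0:ℝ)..t, F (s - ε) = ∫ s in (-ε)..(t - ε), F s := by
    simpa using intervalIntegral.integral_comp_sub_right (a := (0:ℝ)) (b := t) F ε
  rw [intervalIntegral.integral_sub (hi 0 t)
    (Continuous.intervalIntegrable (show Continuous fun s : ℝ => F (s - ε) by continuity) 0 t), h0]
  have h1 := intervalIntegral.integral_add_adjacent_intervals (hi (-ε) 0) (hi 0 t)
  have h2 := intervalIntegral.integral_add_adjacent_intervals (hi (-ε) (t-ε)) (hi (t-ε) t)
  linarith

-- averaging bound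
lemma avg_near (F : ℝ → ℝ) (hF : Continuous F) (c ε δ : ℝ) (hε : 0 < ε)
    (hδ : ∀ s ∈ Set.Icc (c-ε) c, |F s - F c| ≤ δ) :
    |ε⁻¹ * (∫ s in (c-ε)..c, F s) - F c| ≤ δ := by
  have hδ0 : 0 ≤ δ := le_trans (abs_nonneg _) (hδ c ⟨by linarith, le_refl c⟩)
  have h1 : ∫ s in (c-ε)..c, (F s - F c) = (∫ s in (c-ε)..c, F s) - ε * F c := by
    rw [intervalIntegral.integral_sub (hF.intervalIntegrable _ _)
      (continuous_const.intervalIntegrable _ _)]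
    simp
  have h2 : ‖∫ s in (c-ε)..c, (F s - F c)‖ ≤ δ * |c - (c - ε)| := by
    apply intervalIntegral.norm_integral_le_of_norm_le_const
    intro s hs
    rw [Set.uIoc_of_le (by linarith : c - ε ≤ c)] at hs
    exact hδ s ⟨le_of_lt hs.1, hs.2⟩
  rw [Real.norm_eq_abs, h1] at h2
  have h3 : |c - (c - ε)| = ε := by rw [abs_of_nonneg] <;> linarith
  rw [h3] at h2
  have : ε⁻¹ * (∫ s in (c-ε)..c, F s) - F c
      = ε⁻¹ * ((∫ s in (c-ε)..c, F s) - ε * F c) := by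
    field_simp
  rw [this, abs_mul, abs_of_nonneg (le_of_lt (inv_pos.mpr hε))]
  calc ε⁻¹ * |(∫ s in (c-ε)..c, F s) - ε * F c| ≤ ε⁻¹ * (δ * ε) := by
        exact mul_le_mul_of_nonneg_left h2 (le_of_lt (inv_pos.mpr hε))
    _ = δ := by field_simp
-- measure interval bound
lemma meas_bound (q : ℝ → ℝ) (hq : Monotone q ∧ ∀ x : ℝ, ContinuousWithinAt q (Set.Ici x) x)
    (g : ℝ → ℝ) (hg : Continuous g) (a b c δ : ℝ) (hab : a ≤ b) (hδ0 : 0 ≤ δ)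
    (h : ∀ s ∈ Set.Ioc a b, |g s - g c| ≤ δ) :
    |(∫ s in Set.Ioc a b, g s ∂(StieltjesFunction.mk q hq.1 hq.2).measure)
      - g c * (q b - q a)| ≤ δ * (q b - q a) := by
  set μ := (StieltjesFunction.mk q hq.1 hq.2).measure
  have hμ : μ (Set.Ioc a b) = ENNReal.ofReal (q b - q a) :=
    StieltjesFunction.measure_Ioc _ a b
  have hfin : μ (Set.Ioc a b) < ⊤ := by rw [hμ]; exact ENNReal.ofReal_lt_top
  have hint : IntegrableOn g (Set.Ioc a b) μ :=
    ((hg.continuousOn).integrableOn_compact isCompact_Icc).mono_set Set.Ioc_subset_Icc_self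
  have hconst : ∫ s in Set.Ioc a b, (g c) ∂μ = g c * (q b - q a) := by
    rw [setIntegral_const, measureReal_def, hμ, smul_eq_mul]
    rw [ENNReal.toReal_ofReal (by linarith [hq.1 hab] : (0:ℝ) ≤ q b - q a)]
    ring
  have hsplit : (∫ s in Set.Ioc a b, g s ∂μ) - g c * (q b - q a)
      = ∫ s in Set.Ioc a b, (g s - g c) ∂μ := by
    rw [MeasureTheory.integral_sub hint (integrableOn_const hfin.ne), hconst]
  rw [hsplit]
  have := norm_setIntegral_le_of_norm_le_const (C := δ) hfin
    (fun s hs => by rw [Real.norm_eq_abs]; exact h s hs)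
  rw [Real.norm_eq_abs] at this
  refine this.trans ?_
  rw [measureReal_def, hμ, ENNReal.toReal_ofReal (by linarith [hq.1 hab] : (0:ℝ) ≤ q b - q a)]

-- weighted interval integral bound
lemma weight_bound (g h : ℝ → ℝ) (hg : Continuous g) (hh : Continuous h)
    (hpos : ∀ s, 0 ≤ h s) (a b c δ : ℝ) (hab : a ≤ b) (hδ0 : 0 ≤ δ)
    (hd : ∀ s ∈ Set.Icc a b, |g s - g c| ≤ δ) :
    |(∫ s in a..b, g s * h s) - g c * ∫ s in a..b, h s| ≤ δ * ∫ s in a..b, h s := by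
  have h1 : (∫ s in a..b, g s * h s) - g c * ∫ s in a..b, h s
      = ∫ s in a..b, (g s - g c) * h s := by
    rw [← intervalIntegral.integral_const_mul,
      ← intervalIntegral.integral_sub (f := fun s => g s * h s) (g := fun s => g c * h s)
        ((hg.mul hh).intervalIntegrable a b)
        ((continuous_const.mul hh).intervalIntegrable a b)]
    congr 1; ext s; ring
  rw [h1]
  have h2 : |∫ s in a..b, (g s - g c) * h s| ≤ ∫ s in a..b, |(g s - g c) * h s| :=
    intervalIntegral.abs_integral_le_integral_abs hab
  refine h2.trans ?_
  rw [← intervalIntegral.integral_const_mul]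
  apply intervalIntegral.integral_mono_on hab
  · exact Continuous.intervalIntegrable (by continuity) a b
  · exact Continuous.intervalIntegrable (by continuity) a b
  · intro s hs
    rw [abs_mul, abs_of_nonneg (hpos s)]
    exact mul_le_mul_of_nonneg_right (hd s hs) (hpos s)


-- additivity of set integral over adjacent Ioc's
lemma sum_Ioc (μ : Measure ℝ) [IsLocallyFiniteMeasure μ] (g : ℝ → ℝ) (hg : Continuous g)
    (u : ℕ → ℝ) (hu : Monotone u) (N : ℕ) :
    ∑ i ∈ Finset.range N, ∫ s in Set.Ioc (u i) (u (i+1)), g s ∂μ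
      = ∫ s in Set.Ioc (u 0) (u N), g s ∂μ := by
  induction N with
  | zero => simp
  | succ n ih =>
    rw [Finset.sum_range_succ, ih]
    have h1 : u 0 ≤ u n := hu (Nat.zero_le n)
    have h2 : u n ≤ u (n+1) := hu (Nat.le_succ n)
    have hunion : Set.Ioc (u 0) (u n) ∪ Set.Ioc (u n) (u (n+1)) = Set.Ioc (u 0) (u (n+1)) :=
      Set.Ioc_union_Ioc_eq_Ioc h1 h2
    have hint : ∀ a b : ℝ, IntegrableOn g (Set.Ioc a b) μ := fun a b =>
      ((hg.continuousOn).integrableOn_compact isCompact_Icc).mono_set Set.Ioc_subset_Icc_self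
    rw [← hunion, setIntegral_union (Set.Ioc_disjoint_Ioc_of_le le_rfl) measurableSet_Ioc
      (hint _ _) (hint _ _)]





lemma riemann_approx
    (q : ℝ → ℝ) (hq : Monotone q ∧ ∀ x : ℝ, ContinuousWithinAt q (Set.Ici x) x)
    (g : ℝ → ℝ) (hg : Continuous g)
    (h : ℝ → ℝ) (hh : Continuous h) (hpos : ∀ s, 0 ≤ h s)
    (T : ℝ) (hT : 0 < T) (N : ℕ) (hN : 0 < N)
    (M δ dd : ℝ) (hM : ∀ s ∈ Set.Icc 0 T, |g s| ≤ M) (hδ0 : 0 ≤ δ) (hdd0 : 0 ≤ dd)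
    (hgosc : ∀ a ∈ Set.Icc (0:ℝ) T, ∀ b ∈ Set.Icc (0:ℝ) T, |a - b| ≤ T / N → |g a - g b| ≤ δ)
    (hdd : ∀ r ∈ Set.Icc (0:ℝ) T, |(∫ s in (0:ℝ)..r, h s) - q r| ≤ dd)
    (t : ℝ) (ht : t ∈ Set.Icc 0 T) :
    |(∫ s in (0:ℝ)..t, g s * h s)
        - ∫ s in Set.Ioc (0:ℝ) t, g s ∂(StieltjesFunction.mk q hq.1 hq.2).measure|
      ≤ δ * (∫ s in (0:ℝ)..T, h s) + δ * (q T - q 0) + N * (M * (2 * dd)) := by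
  set μ := (StieltjesFunction.mk q hq.1 hq.2).measure with hμdef
  haveI : IsLocallyFiniteMeasure μ := by
    rw [hμdef]; infer_instance
  obtain ⟨ht0, htT⟩ := ht
  set u : ℕ → ℝ := fun i => min ((i : ℝ) * (T / N)) t with hudef
  have hNR : (0:ℝ) < N := Nat.cast_pos.mpr hN
  have hu : Monotone u := fun i j hij => by
    apply min_le_min _ le_rfl
    apply mul_le_mul_of_nonneg_right (Nat.cast_le.mpr hij) (le_of_lt (div_pos hT hNR))
  have hu0 : u 0 = 0 := by simp [hudef, ht0]
  have huN : u N = t := by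
    have : (N:ℝ) * (T / N) = T := by field_simp
    simp [hudef, this, min_eq_right htT]
  have humem : ∀ i, u i ∈ Set.Icc (0:ℝ) T := fun i => by
    constructor
    · rw [hudef]; positivity
    · exact le_trans (min_le_right _ _) htT
  have hustep : ∀ i : ℕ, u (i+1) - u i ≤ T / N := fun i => by
    have h1 : u (i+1) ≤ (i : ℝ) * (T / N) + T / N := by
      apply le_trans (min_le_left _ _)
      push_cast; rw [add_mul, one_mul]
    have h2 : u (i+1) ≤ t := min_le_right _ _
    have h5 : u i ≤ u (i+1) := hu (Nat.le_succ i)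
    rcases le_total ((i:ℝ) * (T/N)) t with hc | hc
    · have : u i = (i:ℝ) * (T/N) := min_eq_left hc
      linarith
    · have : u i = t := min_eq_right hc
      linarith [div_nonneg hT.le hNR.le]
  have hc0 : ∀ i : ℕ, (0:ℝ) ≤ ∫ s in (u i)..(u (i+1)), h s := fun i =>
    intervalIntegral.integral_nonneg (hu (Nat.le_succ i)) (fun s _ => hpos s)
  have hA : ∫ s in (0:ℝ)..t, g s * h s
      = ∑ i ∈ Finset.range N, ∫ s in (u i)..(u (i+1)), g s * h s := by
    rw [intervalIntegral.sum_integral_adjacent_intervals (f := fun s => g s * h s)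
      (fun k _ => (hg.mul hh).intervalIntegrable _ _), hu0, huN]
  have hC : ∫ s in (0:ℝ)..t, h s = ∑ i ∈ Finset.range N, ∫ s in (u i)..(u (i+1)), h s := by
    rw [intervalIntegral.sum_integral_adjacent_intervals
      (fun k _ => hh.intervalIntegrable _ _), hu0, huN]
  have hI : ∫ s in Set.Ioc (0:ℝ) t, g s ∂μ
      = ∑ i ∈ Finset.range N, ∫ s in Set.Ioc (u i) (u (i+1)), g s ∂μ := by
    have hsum := sum_Ioc μ g hg u hu N
    rw [hsum, hu0, huN]
  rw [hA, hI, ← Finset.sum_sub_distrib]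
  refine (Finset.abs_sum_le_sum_abs _ _).trans ?_
  have hbound : ∀ i ∈ Finset.range N,
      |(∫ s in (u i)..(u (i+1)), g s * h s) - ∫ s in Set.Ioc (u i) (u (i+1)), g s ∂μ|
        ≤ δ * (∫ s in (u i)..(u (i+1)), h s) + δ * (q (u (i+1)) - q (u i)) + M * (2 * dd) := by
    intro i _
    have hab : u i ≤ u (i+1) := hu (Nat.le_succ i)
    have hosc : ∀ s ∈ Set.Icc (u i) (u (i+1)), |g s - g (u i)| ≤ δ := by
      intro s hs
      apply hgosc s ⟨le_trans (humem i).1 hs.1, le_trans hs.2 (humem (i+1)).2⟩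
        (u i) (humem i) ?_
      rw [abs_of_nonneg (by linarith [hs.1])]
      linarith [hs.2, hustep i]
    have h1 := weight_bound g h hg hh hpos (u i) (u (i+1)) (u i) δ hab hδ0 hosc
    have h2 := meas_bound q hq g hg (u i) (u (i+1)) (u i) δ hab hδ0
      (fun s hs => hosc s ⟨le_of_lt hs.1, hs.2⟩)
    have h3 : |g (u i) * (∫ s in (u i)..(u (i+1)), h s) - g (u i) * (q (u (i+1)) - q (u i))|
        ≤ M * (2 * dd) := by
      have hMi := hM (u i) (humem i)
      have hci : ∫ s in (u i)..(u (i+1)), h s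
          = (∫ s in (0:ℝ)..(u (i+1)), h s) - ∫ s in (0:ℝ)..(u i), h s := by
        have := intervalIntegral.integral_add_adjacent_intervals (μ := volume)
          (hh.intervalIntegrable 0 (u i)) (hh.intervalIntegrable (u i) (u (i+1)))
        linarith
      have d1 := hdd (u i) (humem i)
      have d2 := hdd (u (i+1)) (humem (i+1))
      have hdiff : |(∫ s in (u i)..(u (i+1)), h s) - (q (u (i+1)) - q (u i))| ≤ 2 * dd := by
        rw [hci]
        calc |(∫ s in (0:ℝ)..(u (i+1)), h s) - (∫ s in (0:ℝ)..(u i), h s) - (q (u (i+1)) - q (u i))|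
            = |((∫ s in (0:ℝ)..(u (i+1)), h s) - q (u (i+1))) - ((∫ s in (0:ℝ)..(u i), h s) - q (u i))| := by ring_nf
          _ ≤ |(∫ s in (0:ℝ)..(u (i+1)), h s) - q (u (i+1))| + |(∫ s in (0:ℝ)..(u i), h s) - q (u i)| := abs_sub _ _
          _ ≤ 2 * dd := by linarith
      rw [← mul_sub, abs_mul]
      exact mul_le_mul hMi hdiff (abs_nonneg _) (le_trans (abs_nonneg _) hMi)
    have tri := abs_sub_le ((∫ s in (u i)..(u (i+1)), g s * h s))
      (g (u i) * ∫ s in (u i)..(u (i+1)), h s) (∫ s in Set.Ioc (u i) (u (i+1)), g s ∂μ)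
    have tri2 := abs_sub_le (g (u i) * ∫ s in (u i)..(u (i+1)), h s)
      (g (u i) * (q (u (i+1)) - q (u i))) (∫ s in Set.Ioc (u i) (u (i+1)), g s ∂μ)
    have h2' : |g (u i) * (q (u (i+1)) - q (u i)) - ∫ s in Set.Ioc (u i) (u (i+1)), g s ∂μ|
        ≤ δ * (q (u (i+1)) - q (u i)) := by
      rw [abs_sub_comm]; exact h2
    linarith
  refine (Finset.sum_le_sum hbound).trans ?_
  rw [Finset.sum_add_distrib, Finset.sum_add_distrib, ← Finset.mul_sum, ← Finset.mul_sum, ← hC]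
  have e1 : ∑ i ∈ Finset.range N, (q (u (i+1)) - q (u i)) = q t - q 0 := by
    rw [Finset.sum_range_sub (fun i => q (u i)), hu0, huN]
  have e2 : ∫ s in (0:ℝ)..t, h s ≤ ∫ s in (0:ℝ)..T, h s :=
    intervalIntegral.integral_mono_interval le_rfl ht0 htT
      (Filter.Eventually.of_forall (fun s => hpos s)) (hh.intervalIntegrable 0 T)
  have e3 : q t - q 0 ≤ q T - q 0 := by linarith [hq.1 htT]
  simp only [Finset.sum_const, Finset.card_range, nsmul_eq_mul]
  rw [e1]
  have m1 := mul_le_mul_of_nonneg_left e2 hδ0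
  have m2 := mul_le_mul_of_nonneg_left e3 hδ0
  linarith


/-- (Pathwise Russo–Vallois Itô formula.) If `x` is continuous with
quadratic variation function `q` (i.e. `C_ε(x,x) → q` uniformly on `[0,T]` as `ε → 0⁺`,
`q` nondecreasing, continuous, `q 0 = 0`) and `f` is `C²`, then
`ε⁻¹ ∫₀ᵗ f'(x s)(x s - x (s-ε)) ds` converges uniformly on `[0,T]` to
`f (x t) - f (x 0) + (1/2) ∫_{(0,t]} f'' (x s) dq s`; in particular the backward
Russo–Vallois integral `∫₀ᵗ f'(x s) dx s` exists and equals the latter. -/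
theorem stmt_13 (T : ℝ) (hT : 0 < T) (x : ℝ → ℝ) (hx : Continuous x)
    (q : ℝ → ℝ) (hq_mono : Monotone q) (hq_cont : Continuous q) (hq0 : q 0 = 0)
    (hquad : TendstoUniformlyOn
      (fun ε t => ε⁻¹ * ∫ s in (0:ℝ)..t, (x s - x (s - ε)) ^ 2) q
      (nhdsWithin 0 (Set.Ioi 0)) (Set.Icc 0 T))
    (f : ℝ → ℝ) (hf : ContDiff ℝ 2 f) :
    TendstoUniformlyOn
      (fun ε t => ε⁻¹ * ∫ s in (0:ℝ)..t, deriv f (x s) * (x s - x (s - ε)))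
      (fun t => f (x t) - f (x 0) +
        (1/2) * lsIntegral q (fun s => deriv (deriv f) (x s)) t)
      (nhdsWithin 0 (Set.Ioi 0)) (Set.Icc 0 T) := by
  -- smoothness facts
  have hf2 : ContDiff ℝ (1 + 1) f := by
    exact (by norm_num : ((1:WithTop ℕ∞) + 1) = 2) ▸ hf
  have hder : ContDiff ℝ 1 (deriv f) := (contDiff_succ_iff_deriv.mp hf2).2.2
  have hd1 : Differentiable ℝ f := hf.differentiable (by norm_num)
  have hd2 : Differentiable ℝ (deriv f) := hder.differentiable one_ne_zero
  have hc2 : Continuous (deriv (deriv f)) := hder.continuous_deriv le_rfl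
  have hc1 : Continuous (deriv f) := hd2.continuous
  -- shorthand functions
  set F : ℝ → ℝ := fun s => f (x s) with hFdef
  set G : ℝ → ℝ := fun s => deriv f (x s) with hGdef
  set g : ℝ → ℝ := fun s => deriv (deriv f) (x s) with hgdef
  have hFc : Continuous F := hd1.continuous.comp hx
  have hGc : Continuous G := hc1.comp hx
  have hgc : Continuous g := hc2.comp hx
  -- the Stieltjes setup
  have hq' : Monotone q ∧ ∀ a : ℝ, ContinuousWithinAt q (Set.Ici a) a :=
    ⟨hq_mono, fun a => hq_cont.continuousAt.continuousWithinAt⟩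
  set μ := (StieltjesFunction.mk q hq'.1 hq'.2).measure with hμdef
  have hls : ∀ t : ℝ, lsIntegral q (fun s => deriv (deriv f) (x s)) t
      = ∫ s in Set.Ioc (0:ℝ) t, g s ∂μ := by
    intro t
    rw [lsIntegral, dif_pos hq']
  have hqT0 : (0:ℝ) ≤ q T := hq0 ▸ hq_mono hT.le
  rw [Metric.tendstoUniformlyOn_iff]
  intro η hη
  -- constants
  obtain ⟨R, hR0, hR⟩ := bound_cont x hx (-1) T
  have hxmem : ∀ s ∈ Set.Icc (-1:ℝ) T, x s ∈ Set.Icc (-R) R := fun s hs =>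
    Set.mem_Icc.mpr (abs_le.mp (hR s hs))
  obtain ⟨M, hM0, hM⟩ := bound_cont g hgc 0 T
  -- B part: modulus for F
  obtain ⟨ρF, hρF, hFmod⟩ := unif_cont F hFc (-1) T (η/8) (by positivity)
  -- E part: modulus for f'' and for x
  have hδ'pos : 0 < η / (8 * (q T + 1)) := by positivity
  set δ' := η / (8 * (q T + 1)) with hδ'def
  obtain ⟨δ₀, hδ₀, hf''mod⟩ := unif_cont (deriv (deriv f)) hc2 (-R) R δ' hδ'pos
  obtain ⟨δx, hδx, hxmod⟩ := unif_cont x hx (-1) T δ₀ hδ₀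
  -- Q part: modulus for g and the partition size
  have hδgpos : 0 < η / (4 * (2 * q T + 2)) := by positivity
  set δg := η / (4 * (2 * q T + 2)) with hδgdef
  obtain ⟨ρg, hρg, hgmod⟩ := unif_cont g hgc 0 T δg hδgpos
  set N : ℕ := ⌈T / ρg⌉₊ + 1 with hNdef
  have hNpos : 0 < N := Nat.succ_pos _
  have hNR : (0:ℝ) < N := by exact_mod_cast hNpos
  have hTN : T / N ≤ ρg := by
    rw [div_le_iff₀ hNR]
    have h1 : T / ρg ≤ (⌈T / ρg⌉₊ : ℝ) := Nat.le_ceil _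
    have h2 : (N:ℝ) = (⌈T / ρg⌉₊ : ℝ) + 1 := by push_cast [hNdef]; ring
    rw [div_le_iff₀ hρg] at h1
    nlinarith
  -- the uniform distance threshold
  set dd := min 1 (η / (8 * (N * (M + 1) + 1))) with hdddef
  have hddpos : 0 < dd := by
    apply lt_min one_pos
    positivity
  have hdd1 : dd ≤ 1 := min_le_left _ _
  have hdd2 : dd ≤ η / (8 * (N * (M + 1) + 1)) := min_le_right _ _
  -- eventual conditions on ε
  have hev1 := Metric.tendstoUniformlyOn_iff.mp hquad dd hddpos
  have hmin : (0:ℝ) < min 1 (min ρF δx) := lt_min one_pos (lt_min hρF hδx)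
  have hev2 : Set.Ioc (0:ℝ) (min 1 (min ρF δx)) ∈ nhdsWithin (0:ℝ) (Set.Ioi 0) :=
    Ioc_mem_nhdsGT_of_mem ⟨le_refl (0:ℝ), hmin⟩
  filter_upwards [hev1, hev2] with ε hdist hεmem
  obtain ⟨hε, hεle⟩ := hεmem
  have hε1 : ε ≤ 1 := hεle.trans (min_le_left _ _)
  have hερF : ε ≤ ρF := hεle.trans ((min_le_right _ _).trans (min_le_left _ _))
  have hεδx : ε ≤ δx := hεle.trans ((min_le_right _ _).trans (min_le_right _ _))
  intro t ht
  obtain ⟨ht0, htT⟩ := ht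
  -- notation for this ε
  set h : ℝ → ℝ := fun s => (x s - x (s - ε)) ^ 2 with hhdef
  have hhc : Continuous h := by
    apply Continuous.pow
    exact hx.sub (hx.comp (continuous_id.sub continuous_const))
  have hhpos : ∀ s, 0 ≤ h s := fun s => sq_nonneg _
  set r : ℝ → ℝ := fun s =>
    G s * (x s - x (s - ε)) - (F s - F (s - ε)) - (1/2) * g s * h s with hrdef
  have hrc : Continuous r := by
    apply Continuous.sub
    apply Continuous.sub
    · exact hGc.mul (hx.sub (hx.comp (continuous_id.sub continuous_const)))
    · exact hFc.sub (hFc.comp (continuous_id.sub continuous_const))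
    · exact (continuous_const.mul hgc).mul hhc
  -- uniform distance facts
  have hCq : ∀ s_1 ∈ Set.Icc (0:ℝ) T, |ε⁻¹ * (∫ s in (0:ℝ)..s_1, h s) - q s_1| ≤ dd := by
    intro r hr
    have := hdist r hr
    rw [Real.dist_eq] at this
    rw [abs_sub_comm]
    exact this.le
  have hCT : ε⁻¹ * (∫ s in (0:ℝ)..T, h s) ≤ q T + 1 := by
    have := hCq T ⟨hT.le, le_refl T⟩
    have h1 := (abs_le.mp this).2
    linarith [hdd1]
  -- the small-increment bound on x
  have hxinc : ∀ s ∈ Set.Icc (0:ℝ) T, |x s - x (s - ε)| ≤ δ₀ := by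
    intro s hs
    apply hxmod s ⟨by linarith [hs.1], hs.2⟩ (s - ε) ⟨by linarith [hs.1], by linarith [hs.2]⟩
    rw [abs_of_nonneg (by linarith)]
    linarith
  ------------------------------------------------------------------
  -- Step 1: the pointwise decomposition of the integral
  ------------------------------------------------------------------
  have hsplit : ∫ s in (0:ℝ)..t, G s * (x s - x (s - ε))
      = (∫ s in (0:ℝ)..t, (F s - F (s - ε)))
        + (1/2) * (∫ s in (0:ℝ)..t, g s * h s)
        + ∫ s in (0:ℝ)..t, r s := by
    have i1 : IntervalIntegrable (fun s => F s - F (s - ε)) volume 0 t :=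
      Continuous.intervalIntegrable (hFc.sub (hFc.comp (continuous_id.sub continuous_const))) _ _
    have i2 : IntervalIntegrable (fun s => (1/2) * g s * h s) volume 0 t :=
      Continuous.intervalIntegrable ((continuous_const.mul hgc).mul hhc) _ _
    have i3 : IntervalIntegrable r volume 0 t := hrc.intervalIntegrable _ _
    have : ∫ s in (0:ℝ)..t, G s * (x s - x (s - ε))
        = ∫ s in (0:ℝ)..t, ((F s - F (s - ε)) + (1/2) * g s * h s + r s) := by
      congr 1
      ext s
      rw [hrdef]
      ring
    rw [this, intervalIntegral.integral_add (i1.add i2) i3, intervalIntegral.integral_add i1 i2]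
    have : ∫ s in (0:ℝ)..t, (1/2) * g s * h s = (1/2) * ∫ s in (0:ℝ)..t, g s * h s := by
      rw [← intervalIntegral.integral_const_mul]
      congr 1; ext s; ring
    rw [this]
  ------------------------------------------------------------------
  -- Step 2: the B part
  ------------------------------------------------------------------
  have hB : |ε⁻¹ * (∫ s in (0:ℝ)..t, (F s - F (s - ε))) - (F t - F 0)| ≤ η/4 := by
    rw [shift_int F hFc t ε]
    have b1 : |ε⁻¹ * (∫ s in (t - ε)..t, F s) - F t| ≤ η/8 := by
      apply avg_near F hFc t ε (η/8) hε
      intro s hs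
      apply hFmod s ⟨by linarith [hs.1], le_trans hs.2 htT⟩ t ⟨by linarith, htT⟩
      rw [abs_of_nonpos (by linarith [hs.2])]
      linarith [hs.1, hερF]
    have b2 : |ε⁻¹ * (∫ s in (-ε)..(0:ℝ), F s) - F 0| ≤ η/8 := by
      have := avg_near F hFc 0 ε (η/8) hε (fun s hs => by
        apply hFmod s ⟨by linarith [hs.1], by linarith [hs.2]⟩ 0 ⟨by linarith, hT.le⟩
        rw [abs_of_nonpos (by linarith [hs.2])]
        linarith [hs.1, hερF])
      rw [zero_sub] at this
      exact this
    calc |ε⁻¹ * ((∫ s in (t - ε)..t, F s) - ∫ s in (-ε)..(0:ℝ), F s) - (F t - F 0)|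
        = |(ε⁻¹ * (∫ s in (t - ε)..t, F s) - F t)
            - (ε⁻¹ * (∫ s in (-ε)..(0:ℝ), F s) - F 0)| := by ring_nf
      _ ≤ |ε⁻¹ * (∫ s in (t - ε)..t, F s) - F t|
            + |ε⁻¹ * (∫ s in (-ε)..(0:ℝ), F s) - F 0| := abs_sub _ _
      _ ≤ η/4 := by linarith
  ------------------------------------------------------------------
  -- Step 3: the E part
  ------------------------------------------------------------------
  have hrptw : ∀ s ∈ Set.Icc (0:ℝ) t, |r s| ≤ δ' * h s := by
    intro s hs
    have hsT : s ∈ Set.Icc (0:ℝ) T := ⟨hs.1, le_trans hs.2 htT⟩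
    have hxa : x s ∈ Set.Icc (-R) R := hxmem s ⟨by linarith [hs.1], hsT.2⟩
    have hxb : x (s - ε) ∈ Set.Icc (-R) R :=
      hxmem (s - ε) ⟨by linarith [hs.1], by linarith [hsT.2]⟩
    have hsub : Set.uIcc (x s) (x (s - ε)) ⊆ Set.Icc (-R) R :=
      Set.uIcc_subset_Icc hxa hxb
    have htay := taylor_aux f hd1 hd2 hc2 (x s) (x (s - ε)) δ' (fun v hv => by
      apply hf''mod v (hsub hv) (x s) hxa
      exact (mem_uIcc_abs hv).trans (by rw [abs_sub_comm]; exact hxinc s hsT))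
    have hreq : r s = f (x (s - ε)) - f (x s) - deriv f (x s) * (x (s - ε) - x s)
        - (1/2) * deriv (deriv f) (x s) * (x (s - ε) - x s)^2 := by
      rw [hrdef, hGdef, hFdef, hgdef, hhdef]
      ring
    rw [hreq]
    have : h s = (x (s - ε) - x s)^2 := by rw [hhdef]; ring
    rw [this]
    exact htay
  have hE : |ε⁻¹ * ∫ s in (0:ℝ)..t, r s| ≤ η/8 := by
    have e1 : |∫ s in (0:ℝ)..t, r s| ≤ ∫ s in (0:ℝ)..t, |r s| :=
      intervalIntegral.abs_integral_le_integral_abs ht0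
    have e2 : ∫ s in (0:ℝ)..t, |r s| ≤ ∫ s in (0:ℝ)..t, δ' * h s := by
      apply intervalIntegral.integral_mono_on ht0
        (Continuous.intervalIntegrable hrc.abs _ _)
        (Continuous.intervalIntegrable (continuous_const.mul hhc) _ _)
      exact hrptw
    have e3 : ∫ s in (0:ℝ)..t, δ' * h s = δ' * ∫ s in (0:ℝ)..t, h s :=
      intervalIntegral.integral_const_mul _ _
    have e4 : ∫ s in (0:ℝ)..t, h s ≤ ∫ s in (0:ℝ)..T, h s :=
      intervalIntegral.integral_mono_interval le_rfl ht0 htT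
        (Filter.Eventually.of_forall hhpos) (hhc.intervalIntegrable 0 T)
    have e5 : (0:ℝ) ≤ ∫ s in (0:ℝ)..t, h s :=
      intervalIntegral.integral_nonneg ht0 (fun s _ => hhpos s)
    have hεinv : (0:ℝ) < ε⁻¹ := inv_pos.mpr hε
    rw [abs_mul, abs_of_pos hεinv]
    calc ε⁻¹ * |∫ s in (0:ℝ)..t, r s| ≤ ε⁻¹ * (δ' * ∫ s in (0:ℝ)..t, h s) := by
          apply mul_le_mul_of_nonneg_left _ hεinv.le
          calc |∫ s in (0:ℝ)..t, r s| ≤ ∫ s in (0:ℝ)..t, |r s| := e1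
            _ ≤ ∫ s in (0:ℝ)..t, δ' * h s := e2
            _ = δ' * ∫ s in (0:ℝ)..t, h s := e3
      _ = δ' * (ε⁻¹ * ∫ s in (0:ℝ)..t, h s) := by ring
      _ ≤ δ' * (ε⁻¹ * ∫ s in (0:ℝ)..T, h s) := by
          apply mul_le_mul_of_nonneg_left _ hδ'pos.le
          exact mul_le_mul_of_nonneg_left e4 hεinv.le
      _ ≤ δ' * (q T + 1) := mul_le_mul_of_nonneg_left hCT hδ'pos.le
      _ = η/8 := by
          rw [hδ'def]
          field_simp
  ------------------------------------------------------------------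
  -- Step 4: the Q part
  ------------------------------------------------------------------
  have hQ : |(∫ s in (0:ℝ)..t, g s * (ε⁻¹ * h s)) - ∫ s in Set.Ioc (0:ℝ) t, g s ∂μ|
      ≤ η/4 + η/4 := by
    have happ := riemann_approx q hq' g hgc (fun s => ε⁻¹ * h s)
      (continuous_const.mul hhc) (fun s => mul_nonneg (inv_pos.mpr hε).le (hhpos s))
      T hT N hNpos M δg dd hM hδgpos.le hddpos.le
      (fun a ha b hb hab => hgmod a ha b hb (hab.trans hTN))
      (fun ρ hρ => by
        rw [intervalIntegral.integral_const_mul]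
        exact hCq ρ hρ)
      t ⟨ht0, htT⟩
    refine happ.trans ?_
    have q1 : ∫ s in (0:ℝ)..T, ε⁻¹ * h s = ε⁻¹ * ∫ s in (0:ℝ)..T, h s :=
      intervalIntegral.integral_const_mul _ _
    have q2 : δg * (∫ s in (0:ℝ)..T, ε⁻¹ * h s) ≤ δg * (q T + 1) := by
      rw [q1]
      exact mul_le_mul_of_nonneg_left hCT hδgpos.le
    have q3 : δg * (q T - q 0) ≤ δg * q T := by
      rw [hq0]
      simp
    have key4 : δg * (2 * q T + 2) = η / 4 := by
      rw [hδgdef]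
      have hne : (2 * q T + 2) ≠ 0 := by positivity
      field_simp
    have q4 : δg * (q T + 1) + δg * q T ≤ η/4 := by
      nlinarith [hδgpos.le, hqT0, key4]
    have q5 : (N:ℝ) * (M * (2 * dd)) ≤ η/4 := by
      have hN1 : (1:ℝ) ≤ N := by exact_mod_cast hNpos
      have h5 : (N:ℝ) * (M * (2 * dd)) ≤ 2 * ((N:ℝ) * (M + 1) + 1) * dd := by
        nlinarith [mul_nonneg (Nat.cast_nonneg N : (0:ℝ) ≤ (N:ℝ)) hddpos.le, hddpos.le, hM0, hN1]
      have h6 : 2 * ((N:ℝ) * (M + 1) + 1) * dd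
          ≤ 2 * ((N:ℝ) * (M + 1) + 1) * (η / (8 * ((N:ℝ) * (M + 1) + 1))) :=
        mul_le_mul_of_nonneg_left hdd2 (by positivity)
      have key5 : 2 * ((N:ℝ) * (M + 1) + 1) * (η / (8 * ((N:ℝ) * (M + 1) + 1))) = η / 4 := by
        have hne : ((N:ℝ) * (M + 1) + 1) ≠ 0 := by positivity
        field_simp
        ring
      linarith
    linarith
  ------------------------------------------------------------------
  -- Final assembly
  ------------------------------------------------------------------
  rw [Real.dist_eq, hls t]
  have key : ε⁻¹ * (∫ s in (0:ℝ)..t, G s * (x s - x (s - ε)))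
      = (ε⁻¹ * ∫ s in (0:ℝ)..t, (F s - F (s - ε)))
        + (1/2) * (∫ s in (0:ℝ)..t, g s * (ε⁻¹ * h s))
        + ε⁻¹ * ∫ s in (0:ℝ)..t, r s := by
    have : ∫ s in (0:ℝ)..t, g s * (ε⁻¹ * h s) = ε⁻¹ * ∫ s in (0:ℝ)..t, g s * h s := by
      rw [← intervalIntegral.integral_const_mul]
      congr 1; ext s; ring
    rw [this, hsplit]
    ring
  have : |(F t - F 0 + (1/2) * ∫ s in Set.Ioc (0:ℝ) t, g s ∂μ)
      - ε⁻¹ * (∫ s in (0:ℝ)..t, G s * (x s - x (s - ε)))| < η := by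
    rw [key]
    have expand : (F t - F 0 + (1/2) * ∫ s in Set.Ioc (0:ℝ) t, g s ∂μ)
        - ((ε⁻¹ * ∫ s in (0:ℝ)..t, (F s - F (s - ε)))
          + (1/2) * (∫ s in (0:ℝ)..t, g s * (ε⁻¹ * h s))
          + ε⁻¹ * ∫ s in (0:ℝ)..t, r s)
        = -((ε⁻¹ * ∫ s in (0:ℝ)..t, (F s - F (s - ε))) - (F t - F 0))
          - (1/2) * ((∫ s in (0:ℝ)..t, g s * (ε⁻¹ * h s)) - ∫ s in Set.Ioc (0:ℝ) t, g s ∂μ)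
          - ε⁻¹ * ∫ s in (0:ℝ)..t, r s := by ring
    rw [expand]
    have tri : |(-((ε⁻¹ * ∫ s in (0:ℝ)..t, (F s - F (s - ε))) - (F t - F 0)))
          - (1/2) * ((∫ s in (0:ℝ)..t, g s * (ε⁻¹ * h s)) - ∫ s in Set.Ioc (0:ℝ) t, g s ∂μ)
          - ε⁻¹ * ∫ s in (0:ℝ)..t, r s|
        ≤ |(ε⁻¹ * ∫ s in (0:ℝ)..t, (F s - F (s - ε))) - (F t - F 0)|
          + (1/2) * |(∫ s in (0:ℝ)..t, g s * (ε⁻¹ * h s)) - ∫ s in Set.Ioc (0:ℝ) t, g s ∂μ|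
          + |ε⁻¹ * ∫ s in (0:ℝ)..t, r s| := by
      have t1 := abs_sub (-((ε⁻¹ * ∫ s in (0:ℝ)..t, (F s - F (s - ε))) - (F t - F 0))
          - (1/2) * ((∫ s in (0:ℝ)..t, g s * (ε⁻¹ * h s)) - ∫ s in Set.Ioc (0:ℝ) t, g s ∂μ))
          (ε⁻¹ * ∫ s in (0:ℝ)..t, r s)
      have t2 := abs_sub (-((ε⁻¹ * ∫ s in (0:ℝ)..t, (F s - F (s - ε))) - (F t - F 0)))
          ((1/2) * ((∫ s in (0:ℝ)..t, g s * (ε⁻¹ * h s)) - ∫ s in Set.Ioc (0:ℝ) t, g s ∂μ))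
      rw [abs_neg] at t2
      rw [abs_mul] at t2
      have : |(1:ℝ)/2| = 1/2 := by norm_num
      rw [this] at t2
      linarith
    refine lt_of_le_of_lt (tri.trans ?_)
      (show η/4 + (1/2)*(η/4 + η/4) + η/8 < η by linarith)
    have := mul_le_mul_of_nonneg_left hQ (by norm_num : (0:ℝ) ≤ 1/2)
    linarith
  exact this
end

section
/- Let T > 0, let h : ℝ → ℝ be continuous, and let (q_ε)_{ε>0} and q be nondecreasing continuous functions ℝ → ℝ with q_ε(0) = q(0) = 0, such that sup_{t∈[0,T]} |q_ε(t) − q(t)| → 0 as ε → 0⁺. Then sup_{t∈[0,T]} | ∫_{(0,t]} h dq_ε − ∫_{(0,t]} h dq | → 0 as ε → 0⁺, where the integrals are Lebesgue–Stieltjes integrals. -/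
open MeasureTheory

/-- Integral of a step function against a Stieltjes measure. -/
lemma step_integral (f : StieltjesFunction ℝ) (n : ℕ) (Δ : ℝ) (hΔ : 0 ≤ Δ)
    (coef : ℕ → ℝ) (t : ℝ) :
    ∫ s in Set.Ioc (0:ℝ) t, (∑ i ∈ Finset.range n,
        (Set.Ioc ((i:ℝ)*Δ) (((i:ℝ)+1)*Δ)).indicator (fun _ => coef i) s) ∂f.measure
    = ∑ i ∈ Finset.range n,
        coef i * (f (max ((i:ℝ)*Δ) (min t (((i:ℝ)+1)*Δ))) - f ((i:ℝ)*Δ)) := by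
  have hfin : f.measure (Set.Ioc (0:ℝ) t) < ⊤ := by
    rw [f.measure_Ioc]; exact ENNReal.ofReal_lt_top
  rw [integral_finset_sum _ (fun i _ =>
    ((integrableOn_const (C := coef i) hfin.ne).indicator
      (measurableSet_Ioc (a := (i:ℝ)*Δ) (b := ((i:ℝ)+1)*Δ)) :
      Integrable _ (f.measure.restrict (Set.Ioc 0 t))))]
  refine Finset.sum_congr rfl fun i _ => ?_
  rw [setIntegral_indicator measurableSet_Ioc, setIntegral_const, smul_eq_mul, mul_comm]
  congr 1
  rw [Set.Ioc_inter_Ioc, max_eq_right (by positivity : (0:ℝ) ≤ (i:ℝ)*Δ)]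
  rcases le_total ((i:ℝ)*Δ) (min t (((i:ℝ)+1)*Δ)) with hc | hc
  · rw [Measure.real, f.measure_Ioc, ENNReal.toReal_ofReal (sub_nonneg.2 (f.mono hc)), max_eq_right hc]
  · rw [Set.Ioc_eq_empty (not_lt.2 hc), Measure.real, measure_empty, ENNReal.toReal_zero,
      max_eq_left hc, sub_self]

/-- The step function is uniformly close to `h` on `(0, T]`. -/
lemma step_close (h : ℝ → ℝ) (T : ℝ) (hT : 0 < T) (n : ℕ) (hn : 0 < n)
    (δ' : ℝ)
    (hmod : ∀ a ∈ Set.Icc 0 T, ∀ b ∈ Set.Icc 0 T, |a - b| ≤ T / n → |h a - h b| ≤ δ')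
    (s : ℝ) (hs : s ∈ Set.Ioc (0:ℝ) T) :
    |h s - ∑ i ∈ Finset.range n,
        (Set.Ioc ((i:ℝ)*(T/n)) (((i:ℝ)+1)*(T/n))).indicator (fun _ => h ((i:ℝ)*(T/n))) s|
      ≤ δ' := by
  set Δ : ℝ := T / n with hΔdef
  have hΔ : 0 < Δ := div_pos hT (by exact_mod_cast hn)
  obtain ⟨hs0, hsT⟩ := hs
  set k : ℕ := ⌈s / Δ⌉₊ with hk
  have hk1 : 1 ≤ k := Nat.one_le_ceil_iff.2 (div_pos hs0 hΔ)
  have hkn : k ≤ n := Nat.ceil_le.2 (by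
    rw [div_le_iff₀ hΔ]
    calc s ≤ T := hsT
    _ = n * Δ := by
      have : (n:ℝ) ≠ 0 := Nat.cast_ne_zero.2 hn.ne'
      rw [hΔdef]; field_simp)
  set i : ℕ := k - 1 with hi
  have hicast : (i:ℝ) = (k:ℝ) - 1 := by
    rw [hi, Nat.cast_sub hk1, Nat.cast_one]
  have hin : i ∈ Finset.range n := Finset.mem_range.2 (by omega)
  have hmem : s ∈ Set.Ioc ((i:ℝ)*Δ) (((i:ℝ)+1)*Δ) := by
    constructor
    · rw [hicast]
      have : ((k:ℝ)) < s / Δ + 1 := Nat.ceil_lt_add_one (le_of_lt (div_pos hs0 hΔ))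
      have h2 : (k:ℝ) - 1 < s / Δ := by linarith
      calc ((k:ℝ) - 1) * Δ < (s / Δ) * Δ := by
            exact mul_lt_mul_of_pos_right h2 hΔ
        _ = s := by field_simp
    · rw [hicast]
      have : s / Δ ≤ (k:ℝ) := Nat.le_ceil _
      calc s = (s / Δ) * Δ := by field_simp
        _ ≤ (k:ℝ) * Δ := mul_le_mul_of_nonneg_right this hΔ.le
        _ = ((k:ℝ) - 1 + 1) * Δ := by ring_nf
  have hsum : (∑ j ∈ Finset.range n,
      (Set.Ioc ((j:ℝ)*Δ) (((j:ℝ)+1)*Δ)).indicator (fun _ => h ((j:ℝ)*Δ)) s)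
      = h ((i:ℝ)*Δ) := by
    rw [Finset.sum_eq_single_of_mem i hin]
    · exact Set.indicator_of_mem hmem _
    · intro j _ hj
      refine Set.indicator_of_notMem ?_ _
      intro hmem'
      rcases lt_or_gt_of_ne hj with hlt | hgt
      · have : ((j:ℝ)+1) * Δ ≤ (i:ℝ) * Δ := by
          have : (j:ℝ) + 1 ≤ (i:ℝ) := by exact_mod_cast hlt
          exact mul_le_mul_of_nonneg_right this hΔ.le
        exact absurd hmem'.2 (not_le.2 (lt_of_le_of_lt this hmem.1))
      · have : ((i:ℝ)+1) * Δ ≤ (j:ℝ) * Δ := by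
          have : (i:ℝ) + 1 ≤ (j:ℝ) := by exact_mod_cast hgt
          exact mul_le_mul_of_nonneg_right this hΔ.le
        exact absurd hmem'.1 (not_lt.2 (le_trans hmem.2 this))
  rw [hsum]
  have hiΔ : (i:ℝ)*Δ ∈ Set.Icc (0:ℝ) T := by
    constructor
    · positivity
    · exact le_trans (le_of_lt hmem.1) hsT
  refine hmod s ⟨hs0.le, hsT⟩ ((i:ℝ)*Δ) hiΔ ?_
  rw [abs_of_nonneg (by linarith [hmem.1] : (0:ℝ) ≤ s - (i:ℝ)*Δ)]
  have := hmem.2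
  have : s ≤ (i:ℝ)*Δ + Δ := by linarith [hmem.2]
  linarith

/-- If `h` is continuous, `(Q ε)_{ε>0}` and `q` are nondecreasing
continuous functions vanishing at `0` with `Q ε → q` uniformly on `[0,T]` as `ε → 0⁺`,
then `t ↦ ∫_{(0,t]} h d(Q ε)` converges to `t ↦ ∫_{(0,t]} h dq` uniformly on `[0,T]`
as `ε → 0⁺`. -/
theorem stmt_14 (T : ℝ) (hT : 0 < T) (h : ℝ → ℝ) (hh : Continuous h)
    (Q : ℝ → ℝ → ℝ) (q : ℝ → ℝ)
    (hQmono : ∀ ε > (0:ℝ), Monotone (Q ε)) (hQcont : ∀ ε > (0:ℝ), Continuous (Q ε))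
    (hQ0 : ∀ ε > (0:ℝ), Q ε 0 = 0)
    (hqmono : Monotone q) (hqcont : Continuous q) (hq0 : q 0 = 0)
    (hconv : TendstoUniformlyOn Q q (nhdsWithin 0 (Set.Ioi 0)) (Set.Icc 0 T)) :
    TendstoUniformlyOn (fun ε t => lsIntegral (Q ε) h t) (fun t => lsIntegral q h t)
      (nhdsWithin 0 (Set.Ioi 0)) (Set.Icc 0 T) := by
  rw [Metric.tendstoUniformlyOn_iff] at hconv ⊢
  intro δ hδ
  -- bound on h
  obtain ⟨M₀, hM₀⟩ := (isCompact_Icc : IsCompact (Set.Icc (0:ℝ) T)).exists_bound_of_continuousOn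
    hh.continuousOn
  set M : ℝ := max M₀ 1 with hM
  have hM1 : 1 ≤ M := le_max_right _ _
  have hMb : ∀ x ∈ Set.Icc (0:ℝ) T, |h x| ≤ M := fun x hx =>
    le_trans (hM₀ x hx) (le_max_left _ _)
  -- modulus of continuity
  have hqT : 0 ≤ q T := hq0 ▸ hqmono hT.le
  set δ' : ℝ := δ / (4 * (q T + 2)) with hδ'def
  have hδ' : 0 < δ' := div_pos hδ (by linarith)
  have hUC : UniformContinuousOn h (Set.Icc 0 T) :=
    isCompact_Icc.uniformContinuousOn_of_continuous hh.continuousOn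
  rw [Metric.uniformContinuousOn_iff] at hUC
  obtain ⟨d, hd, hdmod⟩ := hUC δ' hδ'
  set n : ℕ := ⌈T / d⌉₊ + 1 with hn
  have hn0 : 0 < n := Nat.succ_pos _
  have hΔd : T / n < d := by
    rw [div_lt_iff₀ (by exact_mod_cast hn0)]
    have h1 : T / d < (n:ℝ) := by
      calc T / d ≤ ⌈T / d⌉₊ := Nat.le_ceil _
        _ < (n:ℝ) := by rw [hn]; push_cast; linarith
    calc T = (T / d) * d := by field_simp
      _ < (n:ℝ) * d := mul_lt_mul_of_pos_right h1 hd
      _ = d * (n:ℝ) := mul_comm _ _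
  set Δ : ℝ := T / n with hΔdef
  have hΔpos : 0 < Δ := div_pos hT (by exact_mod_cast hn0)
  have hmod : ∀ a ∈ Set.Icc (0:ℝ) T, ∀ b ∈ Set.Icc (0:ℝ) T, |a - b| ≤ Δ → |h a - h b| ≤ δ' := by
    intro a ha b hb hab
    have : dist a b < d := by rw [Real.dist_eq]; linarith
    exact le_of_lt (by simpa [Real.dist_eq] using hdmod a ha b hb this)
  -- choice of η
  set η : ℝ := min 1 (δ / (8 * ((n:ℝ) * M + 1))) with hη
  have hnM : 0 < (n:ℝ) * M + 1 := by
    have : (0:ℝ) ≤ (n:ℝ) * M := by positivity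
    linarith
  have hηpos : 0 < η := lt_min one_pos (div_pos hδ (by linarith))
  filter_upwards [hconv η hηpos, self_mem_nhdsWithin] with ε hε hεpos
  have hεpos : (0:ℝ) < ε := hεpos
  have hQm := hQmono ε hεpos
  have hQc := hQcont ε hεpos
  have hQz := hQ0 ε hεpos
  -- distance bound on the interval
  have hdist : ∀ x ∈ Set.Icc (0:ℝ) T, |Q ε x - q x| ≤ η := by
    intro x hx
    have := hε x hx
    rw [Real.dist_eq, abs_sub_comm] at this
    exact this.le
  -- Stieltjes functions
  have hqprop : Monotone q ∧ ∀ x : ℝ, ContinuousWithinAt q (Set.Ici x) x :=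
    ⟨hqmono, fun x => hqcont.continuousWithinAt⟩
  have hQprop : Monotone (Q ε) ∧ ∀ x : ℝ, ContinuousWithinAt (Q ε) (Set.Ici x) x :=
    ⟨hQm, fun x => hQc.continuousWithinAt⟩
  set Sq : StieltjesFunction ℝ := StieltjesFunction.mk q hqprop.1 hqprop.2 with hSq
  set SQ : StieltjesFunction ℝ := StieltjesFunction.mk (Q ε) hQprop.1 hQprop.2 with hSQ
  have hSqval : ∀ x, Sq x = q x := fun x => rfl
  have hSQval : ∀ x, SQ x = Q ε x := fun x => rfl
  intro t ht
  obtain ⟨ht0, htT⟩ := ht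
  have hlsq : lsIntegral q h t = ∫ s in Set.Ioc (0:ℝ) t, h s ∂Sq.measure := dif_pos hqprop
  have hlsQ : lsIntegral (Q ε) h t = ∫ s in Set.Ioc (0:ℝ) t, h s ∂SQ.measure := dif_pos hQprop
  rw [Real.dist_eq, hlsq, hlsQ]
  -- the step function
  set g : ℝ → ℝ := fun s => ∑ i ∈ Finset.range n,
    (Set.Ioc ((i:ℝ)*Δ) (((i:ℝ)+1)*Δ)).indicator (fun _ => h ((i:ℝ)*Δ)) s with hg
  -- integrability facts
  have hmeasfin : ∀ (f : StieltjesFunction ℝ), f.measure (Set.Ioc (0:ℝ) t) < ⊤ := fun f => by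
    rw [f.measure_Ioc]; exact ENNReal.ofReal_lt_top
  have hint_h : ∀ (f : StieltjesFunction ℝ), IntegrableOn h (Set.Ioc (0:ℝ) t) f.measure :=
    fun f => hh.integrableOn_Ioc
  have hint_g : ∀ (f : StieltjesFunction ℝ), IntegrableOn g (Set.Ioc (0:ℝ) t) f.measure := by
    intro f
    refine integrable_finset_sum _ (fun i _ => ?_)
    exact (integrableOn_const (hmeasfin f).ne).indicator measurableSet_Ioc
  -- split each integral
  have hsplit : ∀ (f : StieltjesFunction ℝ),
      ∫ s in Set.Ioc (0:ℝ) t, h s ∂f.measure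
        = (∫ s in Set.Ioc (0:ℝ) t, (h s - g s) ∂f.measure)
          + ∑ i ∈ Finset.range n,
              h ((i:ℝ)*Δ) * (f (max ((i:ℝ)*Δ) (min t (((i:ℝ)+1)*Δ))) - f ((i:ℝ)*Δ)) := by
    intro f
    rw [← step_integral f n Δ hΔpos.le (fun i => h ((i:ℝ)*Δ)) t]
    rw [integral_sub (hint_h f) (hint_g f)]
    ring
  -- error bound for the (h - g) parts
  have herr : ∀ (f : StieltjesFunction ℝ),
      |∫ s in Set.Ioc (0:ℝ) t, (h s - g s) ∂f.measure| ≤ δ' * (f t - f 0) := by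
    intro f
    have hb : ∀ s ∈ Set.Ioc (0:ℝ) t, ‖h s - g s‖ ≤ δ' := by
      intro s hs
      have hs' : s ∈ Set.Ioc (0:ℝ) T := ⟨hs.1, le_trans hs.2 htT⟩
      simpa [Real.norm_eq_abs] using step_close h T hT n hn0 δ' hmod s hs'
    have hbd := norm_setIntegral_le_of_norm_le_const (hmeasfin f) hb
    rw [Real.norm_eq_abs, Measure.real] at hbd
    refine le_trans hbd ?_
    have htoReal : (f.measure (Set.Ioc (0:ℝ) t)).toReal = f t - f 0 := by
      rw [f.measure_Ioc, ENNReal.toReal_ofReal (sub_nonneg.2 (f.mono ht0))]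
    rw [htoReal]
  -- bound the two error terms
  have hδ'qT : δ' * (q T + 2) = δ / 4 := by
    rw [hδ'def]
    field_simp
  have hA : |∫ s in Set.Ioc (0:ℝ) t, (h s - g s) ∂Sq.measure| ≤ δ / 4 := by
    refine le_trans (herr Sq) ?_
    have h1 : Sq t - Sq 0 ≤ q T + 2 := by
      have e0 : Sq 0 = q 0 := rfl
      have e1 : Sq t = q t := rfl
      rw [e0, e1, hq0]
      have := hqmono htT
      linarith
    calc δ' * (Sq t - Sq 0) ≤ δ' * (q T + 2) := mul_le_mul_of_nonneg_left h1 hδ'.le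
      _ = δ / 4 := hδ'qT
  have hη1 : η ≤ 1 := min_le_left _ _
  have hB : |∫ s in Set.Ioc (0:ℝ) t, (h s - g s) ∂SQ.measure| ≤ δ / 4 := by
    refine le_trans (herr SQ) ?_
    have h1 : SQ t - SQ 0 ≤ q T + 2 := by
      have e0 : SQ 0 = Q ε 0 := rfl
      have e1 : SQ t = Q ε t := rfl
      rw [e0, e1, hQz]
      have h2 : Q ε t ≤ Q ε T := hQm htT
      have h3 : |Q ε T - q T| ≤ η := hdist T ⟨hT.le, le_refl T⟩
      have h4 : Q ε T - q T ≤ η := le_trans (le_abs_self _) h3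
      linarith
    calc δ' * (SQ t - SQ 0) ≤ δ' * (q T + 2) := mul_le_mul_of_nonneg_left h1 hδ'.le
      _ = δ / 4 := hδ'qT
  -- bound the difference of the sums
  have hdist' : ∀ x ∈ Set.Icc (0:ℝ) T, |Sq x - SQ x| ≤ η := by
    intro x hx
    have e1 : Sq x = q x := rfl
    have e2 : SQ x = Q ε x := rfl
    rw [e1, e2, abs_sub_comm]
    exact hdist x hx
  have haIcc : ∀ i ∈ Finset.range n, ((i:ℝ)*Δ) ∈ Set.Icc (0:ℝ) T := by
    intro i hi
    have hi' : (i:ℝ) ≤ (n:ℝ) := by exact_mod_cast (Finset.mem_range.1 hi).le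
    constructor
    · positivity
    · calc (i:ℝ)*Δ ≤ (n:ℝ)*Δ := mul_le_mul_of_nonneg_right hi' hΔpos.le
        _ = T := by rw [hΔdef]; field_simp
  have hDIcc : ∀ i ∈ Finset.range n,
      (max ((i:ℝ)*Δ) (min t (((i:ℝ)+1)*Δ))) ∈ Set.Icc (0:ℝ) T := by
    intro i hi
    constructor
    · exact le_trans (haIcc i hi).1 (le_max_left _ _)
    · exact max_le (haIcc i hi).2 (le_trans (min_le_left _ _) htT)
  have hsumdiff :
      |(∑ i ∈ Finset.range n,
          h ((i:ℝ)*Δ) * (Sq (max ((i:ℝ)*Δ) (min t (((i:ℝ)+1)*Δ))) - Sq ((i:ℝ)*Δ)))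
        - ∑ i ∈ Finset.range n,
          h ((i:ℝ)*Δ) * (SQ (max ((i:ℝ)*Δ) (min t (((i:ℝ)+1)*Δ))) - SQ ((i:ℝ)*Δ))|
        ≤ δ / 4 := by
    rw [← Finset.sum_sub_distrib]
    refine le_trans (Finset.abs_sum_le_sum_abs _ _) ?_
    have hterm : ∀ i ∈ Finset.range n,
        |h ((i:ℝ)*Δ) * (Sq (max ((i:ℝ)*Δ) (min t (((i:ℝ)+1)*Δ))) - Sq ((i:ℝ)*Δ))
          - h ((i:ℝ)*Δ) * (SQ (max ((i:ℝ)*Δ) (min t (((i:ℝ)+1)*Δ))) - SQ ((i:ℝ)*Δ))|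
          ≤ M * (2 * η) := by
      intro i hi
      have h1 := hdist' _ (hDIcc i hi)
      have h2 := hdist' _ (haIcc i hi)
      have h3 := hMb _ (haIcc i hi)
      set D := max ((i:ℝ)*Δ) (min t (((i:ℝ)+1)*Δ))
      have key : h ((i:ℝ)*Δ) * (Sq D - Sq ((i:ℝ)*Δ)) - h ((i:ℝ)*Δ) * (SQ D - SQ ((i:ℝ)*Δ))
          = h ((i:ℝ)*Δ) * ((Sq D - SQ D) - (Sq ((i:ℝ)*Δ) - SQ ((i:ℝ)*Δ))) := by ring
      rw [key, abs_mul]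
      have h4 : |(Sq D - SQ D) - (Sq ((i:ℝ)*Δ) - SQ ((i:ℝ)*Δ))| ≤ 2 * η := by
        have := abs_sub (Sq D - SQ D) (Sq ((i:ℝ)*Δ) - SQ ((i:ℝ)*Δ))
        calc |(Sq D - SQ D) - (Sq ((i:ℝ)*Δ) - SQ ((i:ℝ)*Δ))|
            ≤ |Sq D - SQ D| + |Sq ((i:ℝ)*Δ) - SQ ((i:ℝ)*Δ)| := abs_sub _ _
          _ ≤ 2 * η := by linarith
      exact mul_le_mul h3 h4 (abs_nonneg _) (by linarith [hM1])
    refine le_trans (Finset.sum_le_sum hterm) ?_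
    rw [Finset.sum_const, Finset.card_range, nsmul_eq_mul]
    have hη2 : η ≤ δ / (8 * ((n:ℝ) * M + 1)) := min_le_right _ _
    have hη3 : η * (8 * ((n:ℝ) * M + 1)) ≤ δ := by
      rw [← le_div_iff₀ (by linarith)]
      exact hη2
    have hM0 : (0:ℝ) ≤ (n:ℝ) * M := by positivity
    nlinarith [hηpos.le, hδ.le]
  -- assemble
  have key : |(∫ s in Set.Ioc (0:ℝ) t, h s ∂Sq.measure) -
        ∫ s in Set.Ioc (0:ℝ) t, h s ∂SQ.measure| < δ := by
    rw [hsplit Sq, hsplit SQ]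
    set A := ∫ s in Set.Ioc (0:ℝ) t, (h s - g s) ∂Sq.measure
    set B := ∫ s in Set.Ioc (0:ℝ) t, (h s - g s) ∂SQ.measure
    set S1 := ∑ i ∈ Finset.range n,
      h ((i:ℝ)*Δ) * (Sq (max ((i:ℝ)*Δ) (min t (((i:ℝ)+1)*Δ))) - Sq ((i:ℝ)*Δ))
    set S2 := ∑ i ∈ Finset.range n,
      h ((i:ℝ)*Δ) * (SQ (max ((i:ℝ)*Δ) (min t (((i:ℝ)+1)*Δ))) - SQ ((i:ℝ)*Δ))
    have hsplit2 : (A + S1) - (B + S2) = (A + -B) + (S1 - S2) := by ring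
    calc |(A + S1) - (B + S2)| = |(A + -B) + (S1 - S2)| := by rw [hsplit2]
      _ ≤ |A + -B| + |S1 - S2| := abs_add_le _ _
      _ ≤ |A| + |B| + |S1 - S2| := by
          have := abs_add_le A (-B)
          rw [abs_neg] at this
          linarith
      _ < δ := by linarith
  exact key
end
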